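/- arXiv:2406.00879 — 9 statements merged into one kernel-verified Lean document; each statement's English description precedes it below -/
import Mathlib

section
/- Equilibrium Propagation formula (Theorem 1): Suppose that for all (w, β) the stationarity condition ∇ₛ𝓔(w, s(w,β)) + β ∇𝓒(s(w,β)) = 0 holds. Then for every w, the gradient with respect to w of the map w ↦ 𝓒(s(w,0)) equals the derivative at β = 0 of the map β ↦ ∇_w 𝓔(w, s(w,β)); that is, ∇_w [𝓒(s(w,0))] = d/dβ|_{β=0} [∂𝓔/∂w (w, s(w,β))]. -/
open InnerProductSpace ContinuousLinearMap

variable {M n : ℕ}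

/-- The candidate derivative of the total-energy function `y ↦ 𝓔(y.1, s y) + y.2 ⬝ 𝓒(s y)`. -/
noncomputable def epL (𝓔 : EuclideanSpace ℝ (Fin M) × EuclideanSpace ℝ (Fin n) → ℝ)
    (𝓒 : EuclideanSpace ℝ (Fin n) → ℝ)
    (s : EuclideanSpace ℝ (Fin M) × ℝ → EuclideanSpace ℝ (Fin n))
    (y : EuclideanSpace ℝ (Fin M) × ℝ) : (EuclideanSpace ℝ (Fin M) × ℝ) →L[ℝ] ℝ :=
  (fderiv ℝ 𝓔 (y.1, s y)).comp
      ((ContinuousLinearMap.fst ℝ (EuclideanSpace ℝ (Fin M)) ℝ).prod 0)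
    + 𝓒 (s y) • ContinuousLinearMap.snd ℝ (EuclideanSpace ℝ (Fin M)) ℝ

lemma epL_apply (𝓔 : EuclideanSpace ℝ (Fin M) × EuclideanSpace ℝ (Fin n) → ℝ)
    (𝓒 : EuclideanSpace ℝ (Fin n) → ℝ)
    (s : EuclideanSpace ℝ (Fin M) × ℝ → EuclideanSpace ℝ (Fin n))
    (y : EuclideanSpace ℝ (Fin M) × ℝ) (p : EuclideanSpace ℝ (Fin M) × ℝ) :
    epL 𝓔 𝓒 s y p = fderiv ℝ 𝓔 (y.1, s y) (p.1, 0) + 𝓒 (s y) * p.2 := by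
  simp [epL]

/-- **Equilibrium Propagation formula (Theorem 1).**
Let `𝓔 : ℝ^M × ℝ^n → ℝ` be a C² energy function, `𝓒 : ℝ^n → ℝ` a C² cost function, and
`s : ℝ^M × ℝ → ℝ^n` a C¹ family of stationary states of the total energy `𝓔 + β𝓒`,
i.e. `∇ₛ𝓔(w, s(w,β)) + β ∇𝓒(s(w,β)) = 0` for all `(w, β)`.  Then the gradient with
respect to `w` of `w ↦ 𝓒(s(w,0))` equals the derivative at `β = 0` of
`β ↦ ∂𝓔/∂w (w, s(w,β))`. -/
theorem equilibrium_propagation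
    {M n : ℕ}
    (𝓔 : EuclideanSpace ℝ (Fin M) × EuclideanSpace ℝ (Fin n) → ℝ)
    (𝓒 : EuclideanSpace ℝ (Fin n) → ℝ)
    (s : EuclideanSpace ℝ (Fin M) × ℝ → EuclideanSpace ℝ (Fin n))
    (h𝓔 : ContDiff ℝ 2 𝓔) (h𝓒 : ContDiff ℝ 2 𝓒) (hs : ContDiff ℝ 1 s)
    (hstat : ∀ (w : EuclideanSpace ℝ (Fin M)) (β : ℝ),
      gradient (fun σ => 𝓔 (w, σ)) (s (w, β)) + β • gradient 𝓒 (s (w, β)) = 0) :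
    ∀ w : EuclideanSpace ℝ (Fin M),
      gradient (fun w' => 𝓒 (s (w', 0))) w
        = deriv (fun β : ℝ => gradient (fun w' => 𝓔 (w', s (w, β))) w) 0 := by
  intro w
  have h𝓔d : Differentiable ℝ 𝓔 := h𝓔.differentiable (by norm_num)
  have h𝓒d : Differentiable ℝ 𝓒 := h𝓒.differentiable (by norm_num)
  have hsd : Differentiable ℝ s := hs.differentiable one_ne_zero
  -- stationarity in fderiv form
  have hstat' : ∀ (w' : EuclideanSpace ℝ (Fin M)) (β : ℝ) (z : EuclideanSpace ℝ (Fin n)),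
      fderiv ℝ (fun σ => 𝓔 (w', σ)) (s (w', β)) z + β * fderiv ℝ 𝓒 (s (w', β)) z = 0 := by
    intro w' β z
    have h : (toDual ℝ (EuclideanSpace ℝ (Fin n)))
        (gradient (fun σ => 𝓔 (w', σ)) (s (w', β)) + β • gradient 𝓒 (s (w', β))) = 0 := by
      rw [hstat w' β]; simp
    rw [map_add, map_smul, gradient, gradient, LinearIsometryEquiv.apply_symm_apply,
      LinearIsometryEquiv.apply_symm_apply] at h
    have h2 := congrArg (fun T : StrongDual ℝ (EuclideanSpace ℝ (Fin n)) => T z) h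
    simpa using h2
  -- partial derivative in σ in terms of full derivative
  have hEpartial : ∀ (a : EuclideanSpace ℝ (Fin M)) (z v : EuclideanSpace ℝ (Fin n)),
      fderiv ℝ (fun σ => 𝓔 (a, σ)) z v = fderiv ℝ 𝓔 (a, z) (0, v) := by
    intro a z v
    have h : HasFDerivAt (fun σ => 𝓔 (a, σ))
        ((fderiv ℝ 𝓔 (a, z)).comp
          ((0 : EuclideanSpace ℝ (Fin n) →L[ℝ] EuclideanSpace ℝ (Fin M)).prod
            (ContinuousLinearMap.id ℝ (EuclideanSpace ℝ (Fin n))))) z :=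
      (h𝓔d (a, z)).hasFDerivAt.comp z ((hasFDerivAt_const a z).prodMk (hasFDerivAt_id z))
    rw [h.fderiv]
    rfl
  -- stationarity rephrased
  have hstat2 : ∀ (y : EuclideanSpace ℝ (Fin M) × ℝ) (z : EuclideanSpace ℝ (Fin n)),
      fderiv ℝ 𝓔 (y.1, s y) (0, z) + y.2 * fderiv ℝ 𝓒 (s y) z = 0 := by
    intro y z
    have := hstat' y.1 y.2 z
    rw [hEpartial, Prod.mk.eta] at this
    exact this
  -- the total energy function and its derivative
  have hG : ∀ y, HasFDerivAt (fun y : EuclideanSpace ℝ (Fin M) × ℝ => 𝓔 (y.1, s y) + y.2 * 𝓒 (s y))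
      (epL 𝓔 𝓒 s y) y := by
    intro y
    have hpair : HasFDerivAt (fun y : EuclideanSpace ℝ (Fin M) × ℝ => (y.1, s y))
        ((ContinuousLinearMap.fst ℝ (EuclideanSpace ℝ (Fin M)) ℝ).prod (fderiv ℝ s y)) y :=
      hasFDerivAt_fst.prodMk (hsd y).hasFDerivAt
    have h1 : HasFDerivAt (fun y : EuclideanSpace ℝ (Fin M) × ℝ => 𝓔 (y.1, s y))
        ((fderiv ℝ 𝓔 (y.1, s y)).comp
          ((ContinuousLinearMap.fst ℝ (EuclideanSpace ℝ (Fin M)) ℝ).prod (fderiv ℝ s y))) y :=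
      (h𝓔d (y.1, s y)).hasFDerivAt.comp y hpair
    have h2 : HasFDerivAt (fun y : EuclideanSpace ℝ (Fin M) × ℝ => 𝓒 (s y))
        ((fderiv ℝ 𝓒 (s y)).comp (fderiv ℝ s y)) y :=
      (h𝓒d (s y)).hasFDerivAt.comp y (hsd y).hasFDerivAt
    have h3 : HasFDerivAt (fun y : EuclideanSpace ℝ (Fin M) × ℝ => y.2 * 𝓒 (s y))
        (y.2 • ((fderiv ℝ 𝓒 (s y)).comp (fderiv ℝ s y))
          + 𝓒 (s y) • ContinuousLinearMap.snd ℝ (EuclideanSpace ℝ (Fin M)) ℝ) y :=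
      hasFDerivAt_snd.mul h2
    have h4 := h1.add h3
    refine h4.congr_fderiv ?_
    refine ContinuousLinearMap.ext fun p => ?_
    have hsplit : fderiv ℝ 𝓔 (y.1, s y) (p.1, fderiv ℝ s y p)
        = fderiv ℝ 𝓔 (y.1, s y) (p.1, 0) + fderiv ℝ 𝓔 (y.1, s y) (0, fderiv ℝ s y p) := by
      rw [← map_add]
      norm_num
    have hkey := hstat2 y (fderiv ℝ s y p)
    simp only [epL, ContinuousLinearMap.add_apply, ContinuousLinearMap.comp_apply,
      ContinuousLinearMap.prod_apply, ContinuousLinearMap.coe_fst', ContinuousLinearMap.coe_snd',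
      ContinuousLinearMap.smul_apply, ContinuousLinearMap.zero_apply, smul_eq_mul]
    rw [hsplit]
    linarith
  -- differentiability of epL at (w, 0)
  have hLd : DifferentiableAt ℝ (epL 𝓔 𝓒 s) (w, (0:ℝ)) := by
    have hA : ContDiff ℝ 1 (fun y : EuclideanSpace ℝ (Fin M) × ℝ => fderiv ℝ 𝓔 (y.1, s y)) :=
      (h𝓔.fderiv_right (by norm_num)).comp (contDiff_fst.prodMk hs)
    have h1 : DifferentiableAt ℝ (fun y : EuclideanSpace ℝ (Fin M) × ℝ =>
        (fderiv ℝ 𝓔 (y.1, s y)).comp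
          ((ContinuousLinearMap.fst ℝ (EuclideanSpace ℝ (Fin M)) ℝ).prod 0)) (w, (0:ℝ)) :=
      (hA.differentiable one_ne_zero _).clm_comp (differentiableAt_const _)
    have h2 : DifferentiableAt ℝ (fun y : EuclideanSpace ℝ (Fin M) × ℝ =>
        𝓒 (s y) • ContinuousLinearMap.snd ℝ (EuclideanSpace ℝ (Fin M)) ℝ) (w, (0:ℝ)) :=
      ((h𝓒d (s (w, 0))).comp _ (hsd (w, 0))).smul_const _
    exact h1.add h2
  have hL' : HasFDerivAt (epL 𝓔 𝓒 s) (fderiv ℝ (epL 𝓔 𝓒 s) (w, 0)) (w, (0:ℝ)) := hLd.hasFDerivAt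
  have hsymm := second_derivative_symmetric hG hL'
  set f'' := fderiv ℝ (epL 𝓔 𝓒 s) (w, (0:ℝ)) with hf''
  -- derivative of y ↦ 𝓒 (s y)
  have hc2 : HasFDerivAt (fun y : EuclideanSpace ℝ (Fin M) × ℝ => 𝓒 (s y))
      ((fderiv ℝ 𝓒 (s (w, 0))).comp (fderiv ℝ s (w, 0))) (w, (0:ℝ)) :=
    (h𝓒d (s (w, 0))).hasFDerivAt.comp _ (hsd (w, 0)).hasFDerivAt
  -- evaluation of epL at (0, 1) gives 𝓒 ∘ s
  have hφ : (fun y => epL 𝓔 𝓒 s y ((0 : EuclideanSpace ℝ (Fin M)), (1:ℝ)))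
      = fun y : EuclideanSpace ℝ (Fin M) × ℝ => 𝓒 (s y) := by
    funext y
    simp [epL_apply, Prod.mk_zero_zero]
  have hc1 : HasFDerivAt (fun y => epL 𝓔 𝓒 s y ((0 : EuclideanSpace ℝ (Fin M)), (1:ℝ)))
      ((epL 𝓔 𝓒 s (w, 0)).comp 0 + f''.flip ((0 : EuclideanSpace ℝ (Fin M)), (1:ℝ))) (w, (0:ℝ)) :=
    hL'.clm_apply (hasFDerivAt_const _ _)
  rw [hφ] at hc1
  have e1 : (epL 𝓔 𝓒 s (w, 0)).comp 0 + f''.flip ((0 : EuclideanSpace ℝ (Fin M)), (1:ℝ))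
      = (fderiv ℝ 𝓒 (s (w, 0))).comp (fderiv ℝ s (w, 0)) := hc1.unique hc2
  -- evaluation of epL at (u, 0)
  have hψ : ∀ (y : EuclideanSpace ℝ (Fin M) × ℝ) (u : EuclideanSpace ℝ (Fin M)),
      epL 𝓔 𝓒 s y (u, (0:ℝ)) = fderiv ℝ 𝓔 (y.1, s y) (u, 0) := by
    intro y u
    simp [epL_apply]
  -- gradient-inner-fderiv
  have hgrad : ∀ (f : EuclideanSpace ℝ (Fin M) → ℝ) (x u : EuclideanSpace ℝ (Fin M)),
      (inner ℝ (gradient f x) u : ℝ) = fderiv ℝ f x u := by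
    intro f x u
    rw [gradient]
    exact toDual_symm_apply
  -- fderiv of w' ↦ 𝓔 (w', s (w, β)) at w
  have hEw : ∀ β : ℝ, HasFDerivAt (fun w' => 𝓔 (w', s (w, β)))
      ((fderiv ℝ 𝓔 (w, s (w, β))).comp
        ((ContinuousLinearMap.id ℝ (EuclideanSpace ℝ (Fin M))).prod 0)) w := fun β =>
    (h𝓔d (w, s (w, β))).hasFDerivAt.comp w ((hasFDerivAt_id w).prodMk (hasFDerivAt_const _ w))
  -- the family of gradients g
  set g : ℝ → EuclideanSpace ℝ (Fin M) :=
    fun β => gradient (fun w' => 𝓔 (w', s (w, β))) w with hg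
  have hgfun : g = fun β => (toDual ℝ (EuclideanSpace ℝ (Fin M))).symm
      ((fderiv ℝ 𝓔 (w, s (w, β))).comp
        ((ContinuousLinearMap.id ℝ (EuclideanSpace ℝ (Fin M))).prod 0)) := by
    funext β
    show gradient (fun w' => 𝓔 (w', s (w, β))) w = _
    rw [gradient, (hEw β).fderiv]
  have hgd : DifferentiableAt ℝ g 0 := by
    rw [hgfun]
    have hA2 : ContDiff ℝ 1 (fun β : ℝ => fderiv ℝ 𝓔 (w, s (w, β))) :=
      (h𝓔.fderiv_right (by norm_num)).comp
        (contDiff_const.prodMk (hs.comp (contDiff_const.prodMk contDiff_id)))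
    have h1 : DifferentiableAt ℝ (fun β : ℝ => (fderiv ℝ 𝓔 (w, s (w, β))).comp
        ((ContinuousLinearMap.id ℝ (EuclideanSpace ℝ (Fin M))).prod 0)) 0 :=
      (hA2.differentiable one_ne_zero 0).clm_comp (differentiableAt_const _)
    exact (((toDual ℝ (EuclideanSpace ℝ (Fin M))).symm.toContinuousLinearEquiv
      : StrongDual ℝ (EuclideanSpace ℝ (Fin M)) ≃L[ℝ]
        EuclideanSpace ℝ (Fin M)).differentiable.differentiableAt).comp 0 h1
  -- main computation, testing against an arbitrary direction u
  apply ext_inner_right ℝ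
  intro u
  -- LHS
  have hLHS : HasFDerivAt (fun w' => 𝓒 (s (w', 0)))
      (((fderiv ℝ 𝓒 (s (w, 0))).comp (fderiv ℝ s (w, 0))).comp
        ((ContinuousLinearMap.id ℝ (EuclideanSpace ℝ (Fin M))).prod 0)) w :=
    by have := hc2.comp w ((hasFDerivAt_id (𝕜 := ℝ) w).prodMk (hasFDerivAt_const (0:ℝ) w)); exact this
  have hLHS2 : (inner ℝ (gradient (fun w' => 𝓒 (s (w', 0))) w) u : ℝ)
      = f'' (u, (0:ℝ)) ((0 : EuclideanSpace ℝ (Fin M)), (1:ℝ)) := by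
    rw [hgrad, hLHS.fderiv, ← e1]
    simp
  -- RHS: derivative of β ↦ epL (w, β) (u, 0)
  have hcurve : HasDerivAt (fun β : ℝ => ((w, β) : EuclideanSpace ℝ (Fin M) × ℝ))
      ((0 : EuclideanSpace ℝ (Fin M)), (1:ℝ)) 0 := (hasDerivAt_const 0 w).prodMk (hasDerivAt_id 0)
  have heval : HasFDerivAt (fun y => epL 𝓔 𝓒 s y (u, (0:ℝ)))
      ((epL 𝓔 𝓒 s (w, 0)).comp 0 + f''.flip (u, (0:ℝ))) (w, (0:ℝ)) :=
    hL'.clm_apply (hasFDerivAt_const _ _)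
  have hRderiv : HasDerivAt (fun β : ℝ => epL 𝓔 𝓒 s (w, β) (u, (0:ℝ)))
      (((epL 𝓔 𝓒 s (w, 0)).comp
          (0 : (EuclideanSpace ℝ (Fin M) × ℝ) →L[ℝ] (EuclideanSpace ℝ (Fin M) × ℝ))
        + f''.flip (u, (0:ℝ)))
        ((0 : EuclideanSpace ℝ (Fin M)), (1:ℝ))) 0 :=
    heval.comp_hasDerivAt 0 hcurve
  -- identify β ↦ ⟪g β, u⟫ with β ↦ epL (w,β) (u,0)
  have hid : (fun β : ℝ => (inner ℝ (g β) u : ℝ)) = fun β : ℝ => epL 𝓔 𝓒 s (w, β) (u, (0:ℝ)) := by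
    funext β
    rw [hg, hgrad, (hEw β).fderiv, hψ]
    rfl
  -- inner with u as a continuous linear map
  have hinner : HasDerivAt (fun β : ℝ => (inner ℝ (g β) u : ℝ)) (inner ℝ (deriv g 0) u : ℝ) 0 := by
    have := HasDerivAt.inner ℝ hgd.hasDerivAt (hasDerivAt_const (0:ℝ) u)
    simpa using this
  rw [hid] at hinner
  have e2 : (inner ℝ (deriv g 0) u : ℝ)
      = ((epL 𝓔 𝓒 s (w, 0)).comp
          (0 : (EuclideanSpace ℝ (Fin M) × ℝ) →L[ℝ] (EuclideanSpace ℝ (Fin M) × ℝ))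
        + f''.flip (u, (0:ℝ)))
        ((0 : EuclideanSpace ℝ (Fin M)), (1:ℝ)) := hinner.unique hRderiv
  rw [hLHS2, e2]
  simp [hsymm]
end

section
/- Exact gradient of the classical contrastive function (envelope property): Fix β ≠ 0 and suppose that for all w the stationarity conditions ∇ₛ𝓔(w, s_β(w)) + β ∇𝓒(s_β(w)) = 0 and ∇ₛ𝓔(w, s₀(w)) = 0 hold. Define the contrastive function 𝓛_β(w) = (1/β)[𝓔(w, s_β(w)) + β𝓒(s_β(w)) − 𝓔(w, s₀(w))]. Then 𝓛_β is differentiable and ∇_w 𝓛_β(w) = (1/β)[∂𝓔/∂w(w, s_β(w)) − ∂𝓔/∂w(w, s₀(w))], i.e. the contrastive learning rule performs exact gradient descent on 𝓛_β. -/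
open InnerProductSpace ContinuousLinearMap

set_option maxHeartbeats 2000000 in
/-- **Exact gradient of the classical contrastive function (envelope property).**
Fix `β ≠ 0`.  If `s_β(w)` is a stationary state of `𝓔(w,·) + β𝓒` and `s₀(w)` a stationary
state of `𝓔(w,·)` for all `w`, then the contrastive function
`𝓛_β(w) = (1/β)[𝓔(w, s_β(w)) + β𝓒(s_β(w)) − 𝓔(w, s₀(w))]` is differentiable with gradient
`(1/β)[∂𝓔/∂w(w, s_β(w)) − ∂𝓔/∂w(w, s₀(w))]`. -/
theorem exact_gradient_of_contrastive_function
    {M n : ℕ} (β : ℝ) (hβ : β ≠ 0)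
    (𝓔 : EuclideanSpace ℝ (Fin M) × EuclideanSpace ℝ (Fin n) → ℝ)
    (𝓒 : EuclideanSpace ℝ (Fin n) → ℝ)
    (sβ s₀ : EuclideanSpace ℝ (Fin M) → EuclideanSpace ℝ (Fin n))
    (h𝓔 : ContDiff ℝ 1 𝓔) (h𝓒 : ContDiff ℝ 1 𝓒)
    (hsβ : Differentiable ℝ sβ) (hs₀ : Differentiable ℝ s₀)
    (hstatβ : ∀ w, gradient (fun σ => 𝓔 (w, σ)) (sβ w) + β • gradient 𝓒 (sβ w) = 0)
    (hstat0 : ∀ w, gradient (fun σ => 𝓔 (w, σ)) (s₀ w) = 0) :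
    ∀ w, HasGradientAt
      (fun w' => (1 / β) * (𝓔 (w', sβ w') + β * 𝓒 (sβ w') - 𝓔 (w', s₀ w')))
      ((1 / β) • (gradient (fun w' => 𝓔 (w', sβ w)) w - gradient (fun w' => 𝓔 (w', s₀ w)) w))
      w := by
  intro w
  have h𝓔d : Differentiable ℝ 𝓔 := h𝓔.differentiable one_ne_zero
  have h𝓒d : Differentiable ℝ 𝓒 := h𝓒.differentiable one_ne_zero
  set D₁ : EuclideanSpace ℝ (Fin M) × EuclideanSpace ℝ (Fin n) →L[ℝ] ℝ := fderiv ℝ 𝓔 (w, sβ w) with hD₁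
  set D₂ : EuclideanSpace ℝ (Fin M) × EuclideanSpace ℝ (Fin n) →L[ℝ] ℝ := fderiv ℝ 𝓔 (w, s₀ w) with hD₂
  set Bβ : EuclideanSpace ℝ (Fin M) →L[ℝ] EuclideanSpace ℝ (Fin n) := fderiv ℝ sβ w with hBβ
  set B₀ : EuclideanSpace ℝ (Fin M) →L[ℝ] EuclideanSpace ℝ (Fin n) := fderiv ℝ s₀ w with hB₀
  set C' : EuclideanSpace ℝ (Fin n) →L[ℝ] ℝ := fderiv ℝ 𝓒 (sβ w) with hC'
  have key : ∀ (G : Type) [inst : NormedAddCommGroup G] [inst2 : InnerProductSpace ℝ G]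
      [inst3 : CompleteSpace G] (f : G → ℝ) (L : G →L[ℝ] ℝ) (x : G),
      HasFDerivAt f L x → ∀ v, (inner ℝ (gradient f x) v : ℝ) = L v := by
    intro G _ _ _ f L x h v
    rw [h.hasGradientAt.gradient, toDual_symm_apply]
  have hσβ : HasFDerivAt (fun σ => 𝓔 (w, σ)) (D₁.comp (inr ℝ (EuclideanSpace ℝ (Fin M)) (EuclideanSpace ℝ (Fin n)))) (sβ w) := by
    exact (h𝓔d (w, sβ w)).hasFDerivAt.comp (sβ w) (hasFDerivAt_prodMk_right w (sβ w))
  have hσ0 : HasFDerivAt (fun σ => 𝓔 (w, σ)) (D₂.comp (inr ℝ (EuclideanSpace ℝ (Fin M)) (EuclideanSpace ℝ (Fin n)))) (s₀ w) := by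
    exact (h𝓔d (w, s₀ w)).hasFDerivAt.comp (s₀ w) (hasFDerivAt_prodMk_right w (s₀ w))
  have hfβ : HasFDerivAt (fun w' => 𝓔 (w', sβ w')) (D₁.comp ((ContinuousLinearMap.id ℝ (EuclideanSpace ℝ (Fin M))).prod Bβ)) w := by
    exact (h𝓔d (w, sβ w)).hasFDerivAt.comp w (HasFDerivAt.prodMk (hasFDerivAt_id w) (hsβ w).hasFDerivAt)
  have hf0 : HasFDerivAt (fun w' => 𝓔 (w', s₀ w')) (D₂.comp ((ContinuousLinearMap.id ℝ (EuclideanSpace ℝ (Fin M))).prod B₀)) w := by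
    exact (h𝓔d (w, s₀ w)).hasFDerivAt.comp w (HasFDerivAt.prodMk (hasFDerivAt_id w) (hs₀ w).hasFDerivAt)
  have hcβ : HasFDerivAt (fun w' => 𝓒 (sβ w')) (C'.comp Bβ) w := by
    exact (h𝓒d (sβ w)).hasFDerivAt.comp w (hsβ w).hasFDerivAt
  have hgβ : HasFDerivAt (fun w' => 𝓔 (w', sβ w)) (D₁.comp (inl ℝ (EuclideanSpace ℝ (Fin M)) (EuclideanSpace ℝ (Fin n)))) w := by
    exact (h𝓔d (w, sβ w)).hasFDerivAt.comp w (hasFDerivAt_prodMk_left w (sβ w))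
  have hg0 : HasFDerivAt (fun w' => 𝓔 (w', s₀ w)) (D₂.comp (inl ℝ (EuclideanSpace ℝ (Fin M)) (EuclideanSpace ℝ (Fin n)))) w := by
    exact (h𝓔d (w, s₀ w)).hasFDerivAt.comp w (hasFDerivAt_prodMk_left w (s₀ w))
  have cancelβ : ∀ u : EuclideanSpace ℝ (Fin n), D₁ (0, u) + β * C' u = 0 := by
    intro u
    have h1 := key (EuclideanSpace ℝ (Fin n)) (fun σ => 𝓔 (w, σ)) (D₁.comp (inr ℝ (EuclideanSpace ℝ (Fin M)) (EuclideanSpace ℝ (Fin n)))) (sβ w) hσβ u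
    have h2 := key (EuclideanSpace ℝ (Fin n)) 𝓒 C' (sβ w) (h𝓒d (sβ w)).hasFDerivAt u
    have h3 := hstatβ w
    have h4 : (inner ℝ (gradient (fun σ => 𝓔 (w, σ)) (sβ w) + β • gradient 𝓒 (sβ w)) u : ℝ) = 0 := by
      rw [h3, inner_zero_left]
    rw [inner_add_left, real_inner_smul_left, h1, h2] at h4
    simpa using h4
  have cancel0 : ∀ u : EuclideanSpace ℝ (Fin n), D₂ (0, u) = 0 := by
    intro u
    have h1 := key (EuclideanSpace ℝ (Fin n)) (fun σ => 𝓔 (w, σ)) (D₂.comp (inr ℝ (EuclideanSpace ℝ (Fin M)) (EuclideanSpace ℝ (Fin n)))) (s₀ w) hσ0 u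
    rw [hstat0 w, inner_zero_left] at h1
    simpa using h1.symm
  have ggβ : ∀ v : EuclideanSpace ℝ (Fin M), (inner ℝ (gradient (fun w' => 𝓔 (w', sβ w)) w) v : ℝ) = D₁ (v, 0) := by
    intro v; simpa using key (EuclideanSpace ℝ (Fin M)) _ _ w hgβ v
  have gg0 : ∀ v : EuclideanSpace ℝ (Fin M), (inner ℝ (gradient (fun w' => 𝓔 (w', s₀ w)) w) v : ℝ) = D₂ (v, 0) := by
    intro v; simpa using key (EuclideanSpace ℝ (Fin M)) _ _ w hg0 v
  have hinner : HasFDerivAt (fun w' => 𝓔 (w', sβ w') + β * 𝓒 (sβ w') - 𝓔 (w', s₀ w'))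
      ((D₁.comp ((ContinuousLinearMap.id ℝ (EuclideanSpace ℝ (Fin M))).prod Bβ) + β • C'.comp Bβ) - D₂.comp ((ContinuousLinearMap.id ℝ (EuclideanSpace ℝ (Fin M))).prod B₀)) w := by
    exact (hfβ.add (hcβ.const_mul β)).sub hf0
  have htotal : HasFDerivAt (fun w' => (1/β) * (𝓔 (w', sβ w') + β * 𝓒 (sβ w') - 𝓔 (w', s₀ w')))
      ((1/β) • ((D₁.comp ((ContinuousLinearMap.id ℝ (EuclideanSpace ℝ (Fin M))).prod Bβ) + β • C'.comp Bβ) - D₂.comp ((ContinuousLinearMap.id ℝ (EuclideanSpace ℝ (Fin M))).prod B₀))) w :=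
    hinner.const_mul (1/β)
  rw [hasGradientAt_iff_hasFDerivAt]
  refine htotal.congr_fderiv ?_
  symm
  apply ContinuousLinearMap.ext
  intro v
  have hd : (toDual ℝ (EuclideanSpace ℝ (Fin M))) ((1 / β) • (gradient (fun w' => 𝓔 (w', sβ w)) w - gradient (fun w' => 𝓔 (w', s₀ w)) w)) v
      = (1/β) * ((inner ℝ (gradient (fun w' => 𝓔 (w', sβ w)) w) v : ℝ) - inner ℝ (gradient (fun w' => 𝓔 (w', s₀ w)) w) v) := by
    simp [toDual_apply_apply, inner_sub_left, real_inner_smul_left, mul_sub]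
  rw [hd, ggβ, gg0]
  have hsplit1 : D₁ (v, Bβ v) = D₁ (v, 0) + D₁ (0, Bβ v) := by
    rw [← map_add]; norm_num
  have hsplit2 : D₂ (v, B₀ v) = D₂ (v, 0) + D₂ (0, B₀ v) := by
    rw [← map_add]; norm_num
  have c1 := cancelβ (Bβ v)
  have c2 := cancel0 (B₀ v)
  simp only [ContinuousLinearMap.smul_apply, ContinuousLinearMap.sub_apply,
    ContinuousLinearMap.add_apply, ContinuousLinearMap.comp_apply,
    ContinuousLinearMap.prod_apply, ContinuousLinearMap.coe_id', id_eq, smul_eq_mul]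
  rw [hsplit1, hsplit2]
  linear_combination (-(1/β)) * c1 + (1/β) * c2
end

section
/- Contrastive function bounds (classical): Let β > 0. Suppose s₀ is a global minimizer of s ↦ 𝓔(s), s_β is a global minimizer of s ↦ 𝓔(s) + β𝓒(s), and s_{−β} is a global minimizer of s ↦ 𝓔(s) − β𝓒(s). Then (1/β)[𝓔(s_β) + β𝓒(s_β) − 𝓔(s₀)] ≤ 𝓒(s₀) ≤ (−1/β)[𝓔(s_{−β}) − β𝓒(s_{−β}) − 𝓔(s₀)]; that is, the contrastive function with positive nudging is a lower bound and with negative nudging an upper bound of the true cost 𝓒(s₀). -/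
/-- **Contrastive function bounds (classical).**
Let `β > 0`.  If `s₀` globally minimizes `𝓔`, `s_β` globally minimizes `𝓔 + β𝓒` and
`s_{−β}` globally minimizes `𝓔 − β𝓒`, then
`(1/β)[𝓔(s_β) + β𝓒(s_β) − 𝓔(s₀)] ≤ 𝓒(s₀) ≤ (−1/β)[𝓔(s_{−β}) − β𝓒(s_{−β}) − 𝓔(s₀)]`. -/
theorem contrastive_function_bounds
    {S : Type*} (𝓔 𝓒 : S → ℝ) (β : ℝ) (hβ : 0 < β)
    (s₀ sβ smβ : S)
    (h₀ : ∀ s', 𝓔 s₀ ≤ 𝓔 s')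
    (hsβ : ∀ s', 𝓔 sβ + β * 𝓒 sβ ≤ 𝓔 s' + β * 𝓒 s')
    (hsmβ : ∀ s', 𝓔 smβ - β * 𝓒 smβ ≤ 𝓔 s' - β * 𝓒 s') :
    (1 / β) * (𝓔 sβ + β * 𝓒 sβ - 𝓔 s₀) ≤ 𝓒 s₀ ∧
      𝓒 s₀ ≤ (-1 / β) * (𝓔 smβ - β * 𝓒 smβ - 𝓔 s₀) := by
  have h1 := hsβ s₀
  have h2 := hsmβ s₀
  constructor
  · rw [div_mul_eq_mul_div, div_le_iff₀ hβ]
    nlinarith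
  · rw [div_mul_eq_mul_div, le_div_iff₀ hβ]
    nlinarith
end

section
/- Differentiability of the nudged minimum energy at β = 0 (classical): Let S be a nonempty compact topological space, 𝓔, 𝓒 : S → ℝ continuous, and suppose 𝓔 has a unique global minimizer s₀ on S. Then the function F(β) = min over s ∈ S of (𝓔(s) + β𝓒(s)) is differentiable at β = 0 with F′(0) = 𝓒(s₀); equivalently, (F(β) − F(0))/β → 𝓒(s₀) as β → 0, so the contrastive function converges to the true cost as the nudging vanishes. -/
/-- **Differentiability of the nudged minimum energy at `β = 0` (classical).**
Let `S` be a nonempty compact topological space, `𝓔, 𝓒 : S → ℝ` continuous, and suppose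
`𝓔` has a unique global minimizer `s₀`.  Then `F(β) = min_{s ∈ S} (𝓔(s) + β𝓒(s))` is
differentiable at `β = 0` with `F′(0) = 𝓒(s₀)`. -/
theorem nudged_minimum_energy_hasDerivAt_zero
    {S : Type*} [TopologicalSpace S] [CompactSpace S] [Nonempty S]
    (𝓔 𝓒 : S → ℝ) (h𝓔 : Continuous 𝓔) (h𝓒 : Continuous 𝓒)
    (s₀ : S) (huniq : ∀ s, s ≠ s₀ → 𝓔 s₀ < 𝓔 s) :
    HasDerivAt (fun β : ℝ => ⨅ s : S, (𝓔 s + β * 𝓒 s)) (𝓒 s₀) 0 := by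
  have hEmin : ∀ s, 𝓔 s₀ ≤ 𝓔 s := by
    intro s
    by_cases h : s = s₀
    · simp [h]
    · exact (huniq s h).le
  -- a bound on |𝓒|
  obtain ⟨sM, -, hsM⟩ :=
    isCompact_univ.exists_isMaxOn Set.univ_nonempty
      (h𝓒.abs.continuousOn : ContinuousOn (fun s => |𝓒 s|) Set.univ)
  set M : ℝ := |𝓒 sM| + 1 with hMdef
  have hM0 : 0 < M := by positivity
  have hM : ∀ s, |𝓒 s| ≤ M := fun s => by
    have : |𝓒 s| ≤ |𝓒 sM| := hsM (Set.mem_univ s)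
    simp only [hMdef]; linarith
  have hF0 : (⨅ s : S, (𝓔 s + (0:ℝ) * 𝓒 s)) = 𝓔 s₀ := by
    simp only [zero_mul, add_zero]
    apply le_antisymm
    · exact ciInf_le ⟨𝓔 s₀, fun x ⟨s, hs⟩ => hs ▸ hEmin s⟩ s₀
    · exact le_ciInf hEmin
  rw [hasDerivAt_iff_isLittleO, Asymptotics.isLittleO_iff]
  intro ε hε
  -- δ : energy gap outside the set where 𝓒 is ε-close to 𝓒 s₀
  obtain ⟨δ, hδ0, hδ⟩ : ∃ δ > 0, ∀ s, ε ≤ |𝓒 s - 𝓒 s₀| → 𝓔 s₀ + δ ≤ 𝓔 s := by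
    by_cases hK : ∃ s, ε ≤ |𝓒 s - 𝓒 s₀|
    · have hKcl : IsClosed {s : S | ε ≤ |𝓒 s - 𝓒 s₀|} :=
        isClosed_le continuous_const (h𝓒.sub continuous_const).abs
      obtain ⟨s₁, hs₁K, hmin⟩ :=
        hKcl.isCompact.exists_isMinOn hK h𝓔.continuousOn
      have hs₁ : s₁ ≠ s₀ := by
        intro h
        rw [h] at hs₁K
        simp only [Set.mem_setOf_eq, sub_self, abs_zero] at hs₁K
        linarith
      refine ⟨𝓔 s₁ - 𝓔 s₀, by linarith [huniq s₁ hs₁], fun s hs => ?_⟩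
      have : 𝓔 s₁ ≤ 𝓔 s := hmin hs
      linarith
    · exact ⟨1, one_pos, fun s hs => absurd ⟨s, hs⟩ hK⟩
  have hball : Metric.ball (0:ℝ) (δ / (2 * M)) ∈ nhds (0:ℝ) :=
    Metric.ball_mem_nhds 0 (by positivity)
  filter_upwards [hball] with β hβ
  have hβsmall : |β| ≤ δ / (2 * M) := by
    have := Metric.mem_ball.mp hβ
    rw [Real.dist_eq, sub_zero] at this
    linarith
  -- lower bound on each term
  have hterm : ∀ s, 𝓔 s₀ + β * 𝓒 s₀ - ε * |β| ≤ 𝓔 s + β * 𝓒 s := by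
    intro s
    by_cases hcase : ε ≤ |𝓒 s - 𝓒 s₀|
    · have hE : 𝓔 s₀ + δ ≤ 𝓔 s := hδ s hcase
      have h1 : β * 𝓒 s₀ - β * 𝓒 s ≤ |β| * (2 * M) := by
        have : β * 𝓒 s₀ - β * 𝓒 s = β * (𝓒 s₀ - 𝓒 s) := by ring
        rw [this]
        calc β * (𝓒 s₀ - 𝓒 s) ≤ |β * (𝓒 s₀ - 𝓒 s)| := le_abs_self _
          _ = |β| * |𝓒 s₀ - 𝓒 s| := abs_mul _ _
          _ ≤ |β| * (2 * M) := by
              apply mul_le_mul_of_nonneg_left _ (abs_nonneg β)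
              calc |𝓒 s₀ - 𝓒 s| ≤ |𝓒 s₀| + |𝓒 s| := abs_sub _ _
                _ ≤ 2 * M := by linarith [hM s, hM s₀]
      have h2 : |β| * (2 * M) ≤ δ := (le_div_iff₀ (by positivity)).mp hβsmall
      nlinarith [mul_nonneg hε.le (abs_nonneg β)]
    · push_neg at hcase
      have h1 : β * 𝓒 s₀ - β * 𝓒 s ≤ ε * |β| := by
        have : β * 𝓒 s₀ - β * 𝓒 s = β * (𝓒 s₀ - 𝓒 s) := by ring
        rw [this]
        calc β * (𝓒 s₀ - 𝓒 s) ≤ |β * (𝓒 s₀ - 𝓒 s)| := le_abs_self _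
          _ = |β| * |𝓒 s₀ - 𝓒 s| := abs_mul _ _
          _ ≤ |β| * ε := by
              apply mul_le_mul_of_nonneg_left _ (abs_nonneg β)
              rw [abs_sub_comm]; exact hcase.le
          _ = ε * |β| := mul_comm _ _
      linarith [hEmin s]
  have hbdd : BddBelow (Set.range fun s => 𝓔 s + β * 𝓒 s) :=
    ⟨𝓔 s₀ + β * 𝓒 s₀ - ε * |β|, fun x ⟨s, hs⟩ => hs ▸ hterm s⟩
  have hlow : 𝓔 s₀ + β * 𝓒 s₀ - ε * |β| ≤ ⨅ s : S, (𝓔 s + β * 𝓒 s) :=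
    le_ciInf hterm
  have hup : (⨅ s : S, (𝓔 s + β * 𝓒 s)) ≤ 𝓔 s₀ + β * 𝓒 s₀ := ciInf_le hbdd s₀
  simp only [hF0, smul_eq_mul, sub_zero, Real.norm_eq_abs]
  rw [abs_le]
  exact ⟨by linarith, by nlinarith [mul_nonneg hε.le (abs_nonneg β)]⟩
end

section
/- Quantum Equilibrium Propagation formula (Theorem 2): Suppose H : ℝ^M → (E →L[ℂ] E) is a twice continuously differentiable family of self-adjoint operators, Ĉ : E →L[ℂ] E is self-adjoint, ψ : ℝ^M × ℝ → E is twice continuously differentiable with ‖ψ(w,β)‖ = 1 for all (w,β), λ : ℝ^M × ℝ → ℝ is twice continuously differentiable, and for all (w,β) the eigenvector equation (H(w) + β • Ĉ)(ψ(w,β)) = λ(w,β) • ψ(w,β) holds. Then for every w and every coordinate index k, the partial derivative with respect to w_k of the map w ↦ re⟨ψ(w,0), Ĉ ψ(w,0)⟩ equals the derivative at β = 0 of the map β ↦ re⟨ψ(w,β), (∂H/∂w_k)(w) ψ(w,β)⟩. -/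
open ContinuousLinearMap

set_option maxHeartbeats 1600000

/-- **Quantum Equilibrium Propagation formula (Theorem 2).**
Let `H : ℝ^M → (E →L[ℂ] E)` be a C² family of self-adjoint Hamiltonians, `Ĉ` a
self-adjoint cost observable, and `ψ(w,β)` a C² family of unit eigenvectors of the total
Hamiltonian `H(w) + β Ĉ` with C² eigenvalue `Λ(w,β)`.  Then for every `w` and coordinate
`k`, the partial derivative in `w_k` of `w ↦ re⟨ψ(w,0), Ĉ ψ(w,0)⟩` equals the derivative
at `β = 0` of `β ↦ re⟨ψ(w,β), (∂H/∂w_k)(w) ψ(w,β)⟩`. -/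
theorem quantum_equilibrium_propagation
    {E : Type*} [NormedAddCommGroup E] [InnerProductSpace ℂ E] [FiniteDimensional ℂ E]
    {M : ℕ}
    (H : EuclideanSpace ℝ (Fin M) → (E →L[ℂ] E))
    (hH : ContDiff ℝ 2 H)
    (hHsa : ∀ w, IsSelfAdjoint (H w))
    (C : E →L[ℂ] E) (hC : IsSelfAdjoint C)
    (ψ : EuclideanSpace ℝ (Fin M) × ℝ → E)
    (hψ : ContDiff ℝ 2 ψ)
    (hψnorm : ∀ w β, ‖ψ (w, β)‖ = 1)
    (Λ : EuclideanSpace ℝ (Fin M) × ℝ → ℝ)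
    (hΛ : ContDiff ℝ 2 Λ)
    (heig : ∀ (w : EuclideanSpace ℝ (Fin M)) (β : ℝ), (H w + (β : ℂ) • C) (ψ (w, β)) = ((Λ (w, β) : ℝ) : ℂ) • ψ (w, β)) :
    ∀ (w : EuclideanSpace ℝ (Fin M)) (k : Fin M),
      fderiv ℝ (fun w' => (inner ℂ (ψ (w', 0)) (C (ψ (w', 0))) : ℂ).re) w
          (EuclideanSpace.single k 1)
        = deriv (fun β : ℝ =>
            (inner ℂ (ψ (w, β)) ((fderiv ℝ H w (EuclideanSpace.single k 1)) (ψ (w, β))) : ℂ).re)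
            0 := by
  have hΛ1 : Differentiable ℝ Λ := hΛ.differentiable two_ne_zero
  have hψ1 : Differentiable ℝ ψ := hψ.differentiable two_ne_zero
  have hH1 : Differentiable ℝ H := hH.differentiable two_ne_zero
  set T : EuclideanSpace ℝ (Fin M) × ℝ → (E →L[ℂ] E) :=
    fun q => H q.1 + (q.2 : ℂ) • C with hTdef
  have heig' : ∀ p : EuclideanSpace ℝ (Fin M) × ℝ,
      T p (ψ p) = ((Λ p : ℝ) : ℂ) • ψ p := by
    intro p; simpa [hTdef] using heig p.1 p.2
  have hψn : ∀ p : EuclideanSpace ℝ (Fin M) × ℝ, ‖ψ p‖ = 1 := fun p => hψnorm p.1 p.2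
  have hTsym : ∀ p (x y : E), (inner ℂ (T p x) y : ℂ) = inner ℂ x (T p y) := by
    intro p x y
    have h1 := (ContinuousLinearMap.isSelfAdjoint_iff_isSymmetric.mp (hHsa p.1)) x y
    have h2 := (ContinuousLinearMap.isSelfAdjoint_iff_isSymmetric.mp hC) x y
    have h1' : (inner ℂ ((H p.1) x) y : ℂ) = inner ℂ x ((H p.1) y) := h1
    have h2' : (inner ℂ (C x) y : ℂ) = inner ℂ x (C y) := h2
    simp only [hTdef, ContinuousLinearMap.add_apply, ContinuousLinearMap.smul_apply,
      inner_add_left, inner_add_right, inner_smul_left, inner_smul_right, Complex.conj_ofReal]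
    rw [h1', h2']
  -- Hellmann–Feynman key identity
  have key : ∀ (p v : EuclideanSpace ℝ (Fin M) × ℝ),
      fderiv ℝ Λ p v
        = (inner ℂ (ψ p) (((fderiv ℝ H p.1) v.1 + ((v.2 : ℝ) : ℂ) • C) (ψ p)) : ℂ).re := by
    intro p v
    set L : (E →L[ℂ] E) →L[ℝ] (E →L[ℝ] E) := restrictScalarsL ℂ E E ℝ ℝ with hLdef
    set Lc : ℝ →L[ℝ] (E →L[ℂ] E) :=
      ContinuousLinearMap.smulRight (Complex.ofRealCLM.restrictScalars ℝ) C with hLc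
    set T' : (EuclideanSpace ℝ (Fin M) × ℝ) →L[ℝ] (E →L[ℂ] E) :=
      (fderiv ℝ H p.1).comp (ContinuousLinearMap.fst ℝ (EuclideanSpace ℝ (Fin M)) ℝ) +
        Lc.comp (ContinuousLinearMap.snd ℝ (EuclideanSpace ℝ (Fin M)) ℝ) with hT'
    have hT : HasFDerivAt T T' p := by
      refine HasFDerivAt.add ?_ ?_
      · exact (hH1 p.1).hasFDerivAt.comp p (hasFDerivAt_fst)
      · exact (Lc.comp (ContinuousLinearMap.snd ℝ (EuclideanSpace ℝ (Fin M)) ℝ)).hasFDerivAt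
    set Tr : EuclideanSpace ℝ (Fin M) × ℝ → (E →L[ℝ] E) := fun q => L (T q) with hTr
    have hTrd : HasFDerivAt Tr (L.comp T') p := L.hasFDerivAt.comp p hT
    have hψp := (hψ1 p).hasFDerivAt
    set dψ : (EuclideanSpace ℝ (Fin M) × ℝ) →L[ℝ] E := fderiv ℝ ψ p with hdψ
    have hTψ : HasFDerivAt (fun q => Tr q (ψ q))
        ((Tr p).comp dψ + (L.comp T').flip (ψ p)) p := hTrd.clm_apply hψp
    have hg : HasFDerivAt (fun q => (inner ℂ (ψ q) (Tr q (ψ q)) : ℂ))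
        ((fderivInnerCLM ℂ (ψ p, Tr p (ψ p))).comp
          (dψ.prod ((Tr p).comp dψ + (L.comp T').flip (ψ p)))) p :=
      hψp.inner ℂ hTψ
    have hgre : HasFDerivAt (fun q => (inner ℂ (ψ q) (Tr q (ψ q)) : ℂ).re)
        (Complex.reCLM.comp ((fderivInnerCLM ℂ (ψ p, Tr p (ψ p))).comp
          (dψ.prod ((Tr p).comp dψ + (L.comp T').flip (ψ p))))) p :=
      Complex.reCLM.hasFDerivAt.comp p hg
    have hTrapp : ∀ q x, Tr q x = T q x := fun q x => rfl
    have hfun : (fun q => (inner ℂ (ψ q) (Tr q (ψ q)) : ℂ).re) = Λ := by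
      funext q
      rw [hTrapp, heig' q, inner_smul_right, inner_self_eq_norm_sq_to_K, hψn q]
      simp
    rw [hfun] at hgre
    rw [hgre.fderiv]
    -- vanishing of the ψ-derivative terms
    have hnorm : HasFDerivAt (fun q => (inner ℂ (ψ q) (ψ q) : ℂ).re)
        (Complex.reCLM.comp ((fderivInnerCLM ℂ (ψ p, ψ p)).comp (dψ.prod dψ))) p :=
      Complex.reCLM.hasFDerivAt.comp p (hψp.inner ℂ hψp)
    have hnormconst : (fun q => (inner ℂ (ψ q) (ψ q) : ℂ).re) = fun _ => (1 : ℝ) := by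
      funext q
      rw [inner_self_eq_norm_sq_to_K, hψn q]
      simp
    have hzero : Complex.reCLM.comp ((fderivInnerCLM ℂ (ψ p, ψ p)).comp (dψ.prod dψ)) = 0 := by
      rw [hnormconst] at hnorm
      exact hnorm.unique (hasFDerivAt_const 1 p)
    have hzero' : (inner ℂ (ψ p) (dψ v) : ℂ).re + (inner ℂ (dψ v) (ψ p) : ℂ).re = 0 := by
      have := congrArg (fun (Z : (EuclideanSpace ℝ (Fin M) × ℝ) →L[ℝ] ℝ) => Z v) hzero
      simpa [fderivInnerCLM_apply] using this
    -- evaluate the derivative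
    have e1 : (inner ℂ (ψ p) ((T p) (dψ v)) : ℂ).re = Λ p * (inner ℂ (ψ p) (dψ v) : ℂ).re := by
      rw [← hTsym p, heig' p, inner_smul_left, Complex.conj_ofReal]
      simp [Complex.re_ofReal_mul]
    have e2 : (inner ℂ (dψ v) (T p (ψ p)) : ℂ).re = Λ p * (inner ℂ (dψ v) (ψ p) : ℂ).re := by
      rw [heig' p, inner_smul_right]
      simp [Complex.re_ofReal_mul]
    have e3 : T' v = (fderiv ℝ H p.1) v.1 + ((v.2 : ℝ) : ℂ) • C := by
      simp [hT', hLc]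
    have e4 : ((L.comp T').flip (ψ p)) v = (T' v) (ψ p) := rfl
    simp only [ContinuousLinearMap.comp_apply, ContinuousLinearMap.prod_apply,
      fderivInnerCLM_apply, ContinuousLinearMap.add_apply, ContinuousLinearMap.flip_apply,
      Complex.reCLM_apply, inner_add_right, Complex.add_re]
    rw [show (L (T' v)) (ψ p) = (T' v) (ψ p) from rfl,
      show (Tr p) (dψ v) = (T p) (dψ v) from rfl,
      show (Tr p) (ψ p) = (T p) (ψ p) from rfl, e1, e2, e3,
      ContinuousLinearMap.add_apply, inner_add_right, Complex.add_re]
    have : Λ p * (inner ℂ (ψ p) (dψ v) : ℂ).re + Λ p * (inner ℂ (dψ v) (ψ p) : ℂ).re = 0 := by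
      rw [← mul_add, hzero', mul_zero]
    linarith [this]
  intro w k
  set e : EuclideanSpace ℝ (Fin M) := EuclideanSpace.single k 1 with he
  set F : EuclideanSpace ℝ (Fin M) × ℝ → (EuclideanSpace ℝ (Fin M) × ℝ) →L[ℝ] ℝ :=
    fderiv ℝ Λ with hF
  have hFc : ContDiff ℝ 1 F := hΛ.fderiv_right (by norm_num)
  have hF2 : HasFDerivAt F (fderiv ℝ F (w, 0)) (w, 0) :=
    (hFc.differentiable one_ne_zero (w, 0)).hasFDerivAt
  set F2 := fderiv ℝ F (w, 0) with hF2d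
  have hsymm := second_derivative_symmetric (fun y => (hΛ1 y).hasFDerivAt) hF2
  -- LHS
  have hLfun : (fun w' => (inner ℂ (ψ (w', 0)) (C (ψ (w', 0))) : ℂ).re)
      = fun w' => F (w', 0) ((0 : EuclideanSpace ℝ (Fin M)), (1 : ℝ)) := by
    funext w'
    rw [hF, key (w', 0) (0, 1)]
    simp
  have hinc : HasFDerivAt (fun w' : EuclideanSpace ℝ (Fin M) => ((w', (0 : ℝ)) : _ × ℝ))
      ((ContinuousLinearMap.id ℝ (EuclideanSpace ℝ (Fin M))).prod 0) w :=
    HasFDerivAt.prodMk (hasFDerivAt_id w) (hasFDerivAt_const (0 : ℝ) w)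
  have hL : HasFDerivAt (fun w' => F (w', 0) ((0 : EuclideanSpace ℝ (Fin M)), (1 : ℝ)))
      ((F (w, 0)).comp 0 +
        (F2.comp ((ContinuousLinearMap.id ℝ (EuclideanSpace ℝ (Fin M))).prod 0)).flip
          ((0 : EuclideanSpace ℝ (Fin M)), (1 : ℝ))) w :=
    (hF2.comp w hinc).clm_apply (hasFDerivAt_const _ w)
  -- RHS
  have hRfun : (fun β : ℝ => (inner ℂ (ψ (w, β)) ((fderiv ℝ H w e) (ψ (w, β))) : ℂ).re)
      = fun β : ℝ => F (w, β) (e, (0 : ℝ)) := by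
    funext β
    rw [hF, key (w, β) (e, 0)]
    simp
  have hinc2 : HasFDerivAt (fun β : ℝ => ((w, β) : EuclideanSpace ℝ (Fin M) × ℝ))
      ((0 : ℝ →L[ℝ] EuclideanSpace ℝ (Fin M)).prod (ContinuousLinearMap.id ℝ ℝ)) 0 :=
    HasFDerivAt.prodMk (hasFDerivAt_const w (0 : ℝ)) (hasFDerivAt_id (0 : ℝ))
  have hR : HasFDerivAt (fun β : ℝ => F (w, β) (e, (0 : ℝ)))
      ((F (w, 0)).comp 0 +
        (F2.comp ((0 : ℝ →L[ℝ] EuclideanSpace ℝ (Fin M)).prod (ContinuousLinearMap.id ℝ ℝ))).flip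
          (e, (0 : ℝ))) 0 :=
    (hF2.comp 0 hinc2).clm_apply (hasFDerivAt_const _ 0)
  rw [hLfun, hRfun, hL.fderiv, (hR.hasDerivAt).deriv]
  simp only [ContinuousLinearMap.add_apply, ContinuousLinearMap.comp_apply,
    ContinuousLinearMap.flip_apply, ContinuousLinearMap.zero_apply, map_zero,
    ContinuousLinearMap.prod_apply, ContinuousLinearMap.id_apply, zero_add, add_zero]
  exact hsymm (e, 0) (0, 1)
end

section
/- Hellmann–Feynman identity for a differentiable family of eigenstates: Let H : ℝ → (E →L[ℂ] E) be a differentiable family of self-adjoint operators and ψ : ℝ → E a differentiable family of unit vectors (‖ψ(t)‖ = 1 for all t) such that for all t, H(t)(ψ(t)) = λ(t) • ψ(t) for some function λ : ℝ → ℝ. Then the function t ↦ re⟨ψ(t), H(t) ψ(t)⟩ is differentiable with derivative re⟨ψ(t), H′(t) ψ(t)⟩; in particular λ′(t) = re⟨ψ(t), H′(t) ψ(t)⟩. -/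
/-- **Hellmann–Feynman identity.**
Let `H : ℝ → (E →L[ℂ] E)` be a differentiable family of self-adjoint operators and
`ψ : ℝ → E` a differentiable family of unit eigenvectors, `H(t) ψ(t) = Λ(t) • ψ(t)` with
`Λ : ℝ → ℝ`.  Then `t ↦ re⟨ψ(t), H(t) ψ(t)⟩` is differentiable with derivative
`re⟨ψ(t), H′(t) ψ(t)⟩`; in particular `Λ′(t) = re⟨ψ(t), H′(t) ψ(t)⟩`. -/
theorem hellmann_feynman
    {E : Type*} [NormedAddCommGroup E] [InnerProductSpace ℂ E] [FiniteDimensional ℂ E]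
    (H : ℝ → (E →L[ℂ] E)) (hH : Differentiable ℝ H)
    (hHsa : ∀ t, IsSelfAdjoint (H t))
    (ψ : ℝ → E) (hψ : Differentiable ℝ ψ) (hψnorm : ∀ t, ‖ψ t‖ = 1)
    (Λ : ℝ → ℝ) (heig : ∀ t, (H t) (ψ t) = ((Λ t : ℝ) : ℂ) • ψ t) :
    ∀ t : ℝ,
      HasDerivAt (fun u => (inner ℂ (ψ u) ((H u) (ψ u)) : ℂ).re)
        ((inner ℂ (ψ t) ((deriv H t) (ψ t)) : ℂ).re) t ∧
      HasDerivAt Λ ((inner ℂ (ψ t) ((deriv H t) (ψ t)) : ℂ).re) t := by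
  intro t
  have hinner_one : ∀ u, (inner ℂ (ψ u) (ψ u) : ℂ) = 1 := by
    intro u
    rw [inner_self_eq_norm_sq_to_K, hψnorm u]
    norm_num
  have key : ∀ u, ((inner ℂ (ψ u) ((H u) (ψ u)) : ℂ)).re = Λ u := by
    intro u
    rw [heig u, inner_smul_right, hinner_one u, mul_one, Complex.ofReal_re]
  set p := deriv ψ t with hp
  set A := deriv H t with hA
  have hψt : HasDerivAt ψ p t := (hψ t).hasDerivAt
  have hHt : HasDerivAt H A t := (hH t).hasDerivAt
  have hHt' : HasDerivAt (fun u => (H u).restrictScalars ℝ) (A.restrictScalars ℝ) t :=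
    (ContinuousLinearMap.restrictScalarsL ℂ E E ℝ ℝ).hasFDerivAt.comp_hasDerivAt t hHt
  have hHψ : HasDerivAt (fun u => (H u) (ψ u))
      ((A.restrictScalars ℝ) (ψ t) + ((H t).restrictScalars ℝ) p) t := by
    simpa using hHt'.clm_apply hψt
  have hinner : HasDerivAt (fun u => (inner ℂ (ψ u) ((H u) (ψ u)) : ℂ))
      (inner ℂ (ψ t) ((A.restrictScalars ℝ) (ψ t) + ((H t).restrictScalars ℝ) p)
        + inner ℂ p ((H t) (ψ t))) t :=
    hψt.inner ℂ hHψ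
  -- derivative of constant ⟪ψ,ψ⟫
  have hnorm : HasDerivAt (fun u => (inner ℂ (ψ u) (ψ u) : ℂ))
      (inner ℂ (ψ t) p + inner ℂ p (ψ t)) t := hψt.inner ℂ hψt
  have hnorm' : HasDerivAt (fun _ : ℝ => (1 : ℂ)) (inner ℂ (ψ t) p + inner ℂ p (ψ t)) t := by
    have := hnorm
    simp only [hinner_one] at this
    exact this
  have hzero : (inner ℂ (ψ t) p : ℂ) + inner ℂ p (ψ t) = 0 :=
    (hnorm'.unique (hasDerivAt_const t (1 : ℂ)))
  have hsym := (hHsa t).isSymmetric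
  have hcancel : (inner ℂ (ψ t) (((H t).restrictScalars ℝ) p) : ℂ) + inner ℂ p ((H t) (ψ t)) = 0 := by
    have h1 : (inner ℂ (ψ t) (((H t).restrictScalars ℝ) p) : ℂ) = (Λ t : ℂ) * inner ℂ (ψ t) p := by
      have h := (hsym (ψ t) p).symm
      simp only [ContinuousLinearMap.coe_coe] at h
      rw [heig t, inner_smul_left, Complex.conj_ofReal] at h
      exact h
    have h2 : (inner ℂ p ((H t) (ψ t)) : ℂ) = (Λ t : ℂ) * inner ℂ p (ψ t) := by
      rw [heig t, inner_smul_right]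
    rw [h1, h2, ← mul_add, hzero, mul_zero]
  have hderiv_eq : (inner ℂ (ψ t) ((A.restrictScalars ℝ) (ψ t) + ((H t).restrictScalars ℝ) p) : ℂ)
      + inner ℂ p ((H t) (ψ t)) = inner ℂ (ψ t) (A (ψ t)) := by
    rw [inner_add_right]
    have : (inner ℂ (ψ t) ((A.restrictScalars ℝ) (ψ t)) : ℂ) = inner ℂ (ψ t) (A (ψ t)) := rfl
    rw [this, add_assoc, hcancel, add_zero]
  have hre : HasDerivAt (fun u => (inner ℂ (ψ u) ((H u) (ψ u)) : ℂ).re)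
      ((inner ℂ (ψ t) (A (ψ t)) : ℂ).re) t := by
    have := Complex.reCLM.hasFDerivAt.comp_hasDerivAt t hinner
    rw [hderiv_eq] at this
    exact this
  refine ⟨hre, ?_⟩
  have : Λ = fun u => (inner ℂ (ψ u) ((H u) (ψ u)) : ℂ).re := funext fun u => (key u).symm
  rw [this]
  exact hre
end

section
/- Quantum contrastive function bounds: Let β > 0. Define λ(β) to be the minimum over unit vectors ψ of re⟨ψ, (H + β • Ĉ) ψ⟩ (the ground-state energy of the total Hamiltonian), and let ψ₀ be a unit vector attaining λ(0), i.e. re⟨ψ₀, H ψ₀⟩ = λ(0). Then (1/β)(λ(β) − λ(0)) ≤ re⟨ψ₀, Ĉ ψ₀⟩ ≤ (1/β)(λ(0) − λ(−β)); that is, the quantum contrastive function with positive nudging lower-bounds, and with negative nudging upper-bounds, the expectation value of the cost observable in the ground state. -/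
/-- **Quantum contrastive function bounds.**
Let `β > 0` and let `lam β` denote the minimum of the energy expectation value
`re⟨ψ, (H + β Ĉ) ψ⟩` over unit vectors `ψ` (the ground-state energy of the total
Hamiltonian).  If the unit vector `ψ₀` attains `lam 0`, then
`(1/β)(lam β − lam 0) ≤ re⟨ψ₀, Ĉ ψ₀⟩ ≤ (1/β)(lam 0 − lam (−β))`. -/
theorem quantum_contrastive_function_bounds
    {E : Type*} [NormedAddCommGroup E] [InnerProductSpace ℂ E] [FiniteDimensional ℂ E]
    (H C : E →L[ℂ] E) (hH : IsSelfAdjoint H) (hC : IsSelfAdjoint C)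
    (lam : ℝ → ℝ)
    (hlam : ∀ β : ℝ, lam β =
      ⨅ ψ : Metric.sphere (0 : E) 1, (inner ℂ (ψ : E) ((H + (β : ℂ) • C) (ψ : E)) : ℂ).re)
    (β : ℝ) (hβ : 0 < β)
    (ψ₀ : E) (hψ₀ : ‖ψ₀‖ = 1)
    (hattain : (inner ℂ ψ₀ (H ψ₀) : ℂ).re = lam 0) :
    (1 / β) * (lam β - lam 0) ≤ (inner ℂ ψ₀ (C ψ₀) : ℂ).re ∧
      (inner ℂ ψ₀ (C ψ₀) : ℂ).re ≤ (1 / β) * (lam 0 - lam (-β)) := by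
  set c : ℝ := (inner ℂ ψ₀ (C ψ₀) : ℂ).re with hc
  have hmem : ψ₀ ∈ Metric.sphere (0 : E) 1 := by
    simp [mem_sphere_zero_iff_norm, hψ₀]
  have hkey : ∀ γ : ℝ, lam γ ≤ lam 0 + γ * c := by
    intro γ
    have hcont : Continuous fun ψ : Metric.sphere (0 : E) 1 =>
        (inner ℂ (ψ : E) ((H + (γ : ℂ) • C) (ψ : E)) : ℂ).re := by
      apply Complex.continuous_re.comp
      exact continuous_inner.comp (continuous_subtype_val.prodMk
        ((H + (γ : ℂ) • C).continuous.comp continuous_subtype_val))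
    have hbdd : BddBelow (Set.range fun ψ : Metric.sphere (0 : E) 1 =>
        (inner ℂ (ψ : E) ((H + (γ : ℂ) • C) (ψ : E)) : ℂ).re) :=
      (isCompact_range hcont).bddBelow
    have hle := ciInf_le hbdd (⟨ψ₀, hmem⟩ : Metric.sphere (0 : E) 1)
    rw [← hlam γ] at hle
    have hval : (inner ℂ ψ₀ ((H + (γ : ℂ) • C) ψ₀) : ℂ).re
        = (inner ℂ ψ₀ (H ψ₀) : ℂ).re + γ * c := by
      rw [ContinuousLinearMap.add_apply, ContinuousLinearMap.smul_apply, inner_add_right,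
        inner_smul_right, Complex.add_re, Complex.re_ofReal_mul]
    calc lam γ ≤ (inner ℂ ψ₀ ((H + (γ : ℂ) • C) ψ₀) : ℂ).re := hle
      _ = lam 0 + γ * c := by rw [hval, hattain]
  have h1 := hkey β
  have h2 := hkey (-β)
  constructor
  · rw [div_mul_eq_mul_div, div_le_iff₀ hβ]
    nlinarith
  · rw [div_mul_eq_mul_div, le_div_iff₀ hβ]
    nlinarith
end

section
/- Differentiability of the nudged ground-state energy at β = 0 (quantum): Suppose the smallest eigenvalue λ(0) of H has a one-dimensional eigenspace, spanned by a unit eigenvector ψ₀. Then the function λ(β) = min over unit vectors ψ of re⟨ψ, (H + β • Ĉ) ψ⟩ is differentiable at β = 0 with λ′(0) = re⟨ψ₀, Ĉ ψ₀⟩. -/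
open scoped InnerProductSpace

section NudgedAux

variable {E : Type*} [NormedAddCommGroup E] [InnerProductSpace ℂ E]

private lemma nudged_quad_expand [FiniteDimensional ℂ E] (H : E →L[ℂ] E) (hH : IsSelfAdjoint H) {n : ℕ}
    (b : OrthonormalBasis (Fin n) ℂ E) (ν : Fin n → ℝ)
    (hb : ∀ i, H (b i) = (ν i : ℂ) • b i) (ψ : E) :
    (⟪ψ, H ψ⟫_ℂ).re = ∑ i, ν i * ‖⟪b i, ψ⟫_ℂ‖ ^ 2 := by
  have hS : (↑H : E →ₗ[ℂ] E).IsSymmetric := hH.isSymmetric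
  have key : ⟪ψ, H ψ⟫_ℂ = ∑ i, (((ν i * ‖⟪b i, ψ⟫_ℂ‖ ^ 2 : ℝ)) : ℂ) := by
    rw [← b.sum_inner_mul_inner ψ (H ψ)]
    refine Finset.sum_congr rfl fun i _ => ?_
    have h0 := hS (b i) ψ
    simp only [ContinuousLinearMap.coe_coe] at h0
    have h1 : ⟪b i, H ψ⟫_ℂ = (ν i : ℂ) * ⟪b i, ψ⟫_ℂ := by
      rw [← h0, hb i, inner_smul_left]; simp
    have h2 : ⟪ψ, b i⟫_ℂ = (starRingEnd ℂ) ⟪b i, ψ⟫_ℂ := (inner_conj_symm _ _).symm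
    rw [h1, h2]
    have h4 : (starRingEnd ℂ) ⟪b i, ψ⟫_ℂ * ((ν i : ℂ) * ⟪b i, ψ⟫_ℂ)
        = (ν i : ℂ) * (⟪b i, ψ⟫_ℂ * (starRingEnd ℂ) ⟪b i, ψ⟫_ℂ) := by ring
    rw [h4, Complex.mul_conj']
    push_cast; ring
  rw [key, ← Complex.ofReal_sum, Complex.ofReal_re]

private lemma nudged_parseval {n : ℕ} (b : OrthonormalBasis (Fin n) ℂ E) (ψ : E) :
    ∑ i, ‖⟪b i, ψ⟫_ℂ‖ ^ 2 = ‖ψ‖ ^ 2 := by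
  have h2 : (∑ i, ((‖⟪b i, ψ⟫_ℂ‖ ^ 2 : ℝ) : ℂ)) = ⟪ψ, ψ⟫_ℂ := by
    rw [← b.sum_inner_mul_inner ψ ψ]
    refine Finset.sum_congr rfl fun i _ => ?_
    have h2 : ⟪ψ, b i⟫_ℂ = (starRingEnd ℂ) ⟪b i, ψ⟫_ℂ := (inner_conj_symm _ _).symm
    rw [h2, Complex.conj_mul']
    push_cast; ring
  have h3 := congrArg Complex.re h2
  rw [← Complex.ofReal_sum, Complex.ofReal_re] at h3
  have h4 : RCLike.re ⟪ψ, ψ⟫_ℂ = ‖ψ‖ ^ 2 := inner_self_eq_norm_sq ψ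
  rw [RCLike.re_to_complex] at h4
  exact h3.trans h4

private lemma nudged_gap_lemma [FiniteDimensional ℂ E] (H : E →L[ℂ] E) (hH : IsSelfAdjoint H)
    (ψ₀ : E) (μ : ℝ) (hψ₀ : ‖ψ₀‖ = 1)
    (hmin : ∀ (ν : ℝ) (v : E), v ≠ 0 → H v = (ν : ℂ) • v → μ ≤ ν)
    (hsimple : ∀ v : E, H v = (μ : ℂ) • v → ∃ c : ℂ, v = c • ψ₀) :
    ∃ δ > 0, ∀ ψ : E,
      μ * ‖ψ‖ ^ 2 + δ * (‖ψ‖ ^ 2 - ‖⟪ψ₀, ψ⟫_ℂ‖ ^ 2) ≤ (⟪ψ, H ψ⟫_ℂ).re := by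
  classical
  have hS : (↑H : E →ₗ[ℂ] E).IsSymmetric := hH.isSymmetric
  have hrank : Module.finrank ℂ E = Module.finrank ℂ E := rfl
  set n := Module.finrank ℂ E
  set b : OrthonormalBasis (Fin n) ℂ E := hS.eigenvectorBasis hrank with hbdef
  set ν : Fin n → ℝ := hS.eigenvalues hrank with hνdef
  have hb : ∀ i, H (b i) = (ν i : ℂ) • b i := fun i =>
    hS.apply_eigenvectorBasis hrank i
  have hbnorm : ∀ i, ‖b i‖ = 1 := fun i => b.orthonormal.1 i
  have hbne : ∀ i, b i ≠ 0 := fun i => b.orthonormal.ne_zero i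
  have hμν : ∀ i, μ ≤ ν i := fun i => hmin (ν i) (b i) (hbne i) (hb i)
  have hψ₀inner : ⟪ψ₀, ψ₀⟫_ℂ = 1 := by
    rw [inner_self_eq_norm_sq_to_K, hψ₀]; norm_num
  have hpar : ∀ i, ν i = μ → ∃ c : ℂ, ‖c‖ = 1 ∧ b i = c • ψ₀ := by
    intro i hi
    obtain ⟨c, hc⟩ := hsimple (b i) (by rw [hb i, hi])
    have hc1 : ‖c‖ = 1 := by
      have h1 : ‖b i‖ = ‖c‖ * ‖ψ₀‖ := by rw [hc, norm_smul]
      rw [hbnorm i, hψ₀, mul_one] at h1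
      exact h1.symm
    exact ⟨c, hc1, hc⟩
  have hGcard : ∀ i j, ν i = μ → ν j = μ → i = j := by
    intro i j hi hj
    by_contra hne
    obtain ⟨c, hc1, hc⟩ := hpar i hi
    obtain ⟨d, hd1, hd⟩ := hpar j hj
    have horth : ⟪b i, b j⟫_ℂ = 0 := b.orthonormal.2 hne
    rw [hc, hd, inner_smul_left, inner_smul_right, hψ₀inner, mul_one] at horth
    rcases mul_eq_zero.mp horth with h | h
    · simp only [map_eq_zero] at h
      rw [h, norm_zero] at hc1; norm_num at hc1
    · rw [h, norm_zero] at hd1; norm_num at hd1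
  set F : Finset (Fin n) := Finset.univ.filter (fun i => ν i ≠ μ) with hF
  set δ : ℝ := if hFne : F.Nonempty then F.inf' hFne (fun i => ν i - μ) else 1 with hδdef
  have hδpos : 0 < δ := by
    rw [hδdef]
    split_ifs with hFne
    · rw [Finset.lt_inf'_iff]
      intro i hi
      have h1 : ν i ≠ μ := (Finset.mem_filter.mp hi).2
      have h2 := lt_of_le_of_ne (hμν i) (Ne.symm h1)
      linarith
    · norm_num
  have hδF : ∀ i ∈ F, δ ≤ ν i - μ := by
    intro i hi
    rw [hδdef]
    rw [dif_pos ⟨i, hi⟩]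
    exact Finset.inf'_le _ hi
  refine ⟨δ, hδpos, fun ψ => ?_⟩
  set a : ℝ := ‖⟪ψ₀, ψ⟫_ℂ‖ with ha
  set z : Fin n → ℝ := fun i => ‖⟪b i, ψ⟫_ℂ‖ ^ 2 with hz
  have hznn : ∀ i, 0 ≤ z i := fun i => sq_nonneg _
  have hsum : ∑ i, z i = ‖ψ‖ ^ 2 := nudged_parseval b ψ
  have hquad : (⟪ψ, H ψ⟫_ℂ).re = ∑ i, ν i * z i := nudged_quad_expand H hH b ν hb ψ
  have hGsum : ∑ i ∈ Finset.univ.filter (fun i => ¬ ν i ≠ μ), z i ≤ a ^ 2 := by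
    set G := Finset.univ.filter (fun i => ¬ ν i ≠ μ) with hG
    have hval : ∀ i ∈ G, z i = a ^ 2 := by
      intro i hi
      have hiμ : ν i = μ := not_not.mp (Finset.mem_filter.mp hi).2
      obtain ⟨c, hc1, hc⟩ := hpar i hiμ
      show ‖⟪b i, ψ⟫_ℂ‖ ^ 2 = a ^ 2
      rw [hc, inner_smul_left, norm_mul, RCLike.norm_conj, hc1, one_mul]
    have hcard : G.card ≤ 1 := Finset.card_le_one.mpr fun i hi j hj =>
      hGcard i j (not_not.mp (Finset.mem_filter.mp hi).2)
        (not_not.mp (Finset.mem_filter.mp hj).2)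
    rw [Finset.sum_congr rfl hval, Finset.sum_const, nsmul_eq_mul]
    have hcard' : (G.card : ℝ) ≤ 1 := by exact_mod_cast hcard
    nlinarith [sq_nonneg a]
  have hsplit := Finset.sum_filter_add_sum_filter_not Finset.univ
    (fun i => ν i ≠ μ) (fun i => (ν i - μ) * z i)
  have hzero : ∑ i ∈ Finset.univ.filter (fun i => ¬ ν i ≠ μ), (ν i - μ) * z i = 0 :=
    Finset.sum_eq_zero fun i hi => by
      have : ν i = μ := not_not.mp (Finset.mem_filter.mp hi).2
      rw [this]; ring
  have hsplitz := Finset.sum_filter_add_sum_filter_not Finset.univ (fun i => ν i ≠ μ) z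
  have hFz : ‖ψ‖ ^ 2 - a ^ 2 ≤ ∑ i ∈ F, z i := by
    rw [hF]
    rw [← hsum]
    linarith [hsplitz]
  have hFsum : δ * (∑ i ∈ F, z i) ≤ ∑ i ∈ F, (ν i - μ) * z i := by
    rw [Finset.mul_sum]
    exact Finset.sum_le_sum fun i hi =>
      mul_le_mul_of_nonneg_right (hδF i hi) (hznn i)
  have hdiff : ∑ i, (ν i - μ) * z i = (∑ i, ν i * z i) - μ * ∑ i, z i := by
    rw [Finset.mul_sum, ← Finset.sum_sub_distrib]
    exact Finset.sum_congr rfl fun i _ => by ring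
  have hmono : δ * (‖ψ‖ ^ 2 - a ^ 2) ≤ δ * ∑ i ∈ F, z i :=
    mul_le_mul_of_nonneg_left hFz hδpos.le
  rw [hquad]
  have hfinal : δ * (‖ψ‖ ^ 2 - a ^ 2) ≤ ∑ i, (ν i - μ) * z i := by
    rw [← hsplit, hzero, add_zero]
    exact hmono.trans hFsum
  rw [hsum] at hdiff
  linarith

private lemma nudged_bdd_below (T : E →L[ℂ] E) :
    BddBelow (Set.range fun φ : Metric.sphere (0 : E) 1 => (⟪(φ : E), T (φ : E)⟫_ℂ).re) := by
  refine ⟨-‖T‖, ?_⟩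
  rintro x ⟨φ, rfl⟩
  have hφ : ‖(φ : E)‖ = 1 := mem_sphere_zero_iff_norm.mp φ.2
  have h1 : ‖⟪(φ : E), T (φ : E)⟫_ℂ‖ ≤ ‖T‖ := by
    calc ‖⟪(φ : E), T (φ : E)⟫_ℂ‖ ≤ ‖(φ : E)‖ * ‖T (φ : E)‖ := norm_inner_le_norm _ _
      _ ≤ ‖(φ : E)‖ * (‖T‖ * ‖(φ : E)‖) := by gcongr; exact T.le_opNorm _
      _ = ‖T‖ := by rw [hφ]; ring
  have h2 : |(⟪(φ : E), T (φ : E)⟫_ℂ).re| ≤ ‖T‖ :=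
    (Complex.abs_re_le_norm _).trans h1
  linarith [(abs_le.mp h2).1]

private lemma nudged_attain [FiniteDimensional ℂ E] [Nontrivial E] (T : E →L[ℂ] E) :
    ∃ ψ : E, ‖ψ‖ = 1 ∧
      (⨅ φ : Metric.sphere (0 : E) 1, (⟪(φ : E), T (φ : E)⟫_ℂ).re) = (⟪ψ, T ψ⟫_ℂ).re := by
  have hcont : Continuous fun x : E => (⟪x, T x⟫_ℂ).re :=
    Complex.continuous_re.comp (continuous_id.inner T.continuous)
  obtain ⟨ψ, hmem, hminon⟩ := (isCompact_sphere (0 : E) 1).exists_isMinOn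
    (NormedSpace.sphere_nonempty.mpr zero_le_one) hcont.continuousOn
  have hψ : ‖ψ‖ = 1 := mem_sphere_zero_iff_norm.mp hmem
  haveI : Nonempty (Metric.sphere (0 : E) 1) := ⟨⟨ψ, hmem⟩⟩
  refine ⟨ψ, hψ, le_antisymm ?_ ?_⟩
  · exact ciInf_le (nudged_bdd_below T) ⟨ψ, hmem⟩
  · exact le_ciInf fun φ => hminon φ.2

private lemma nudged_pyth (ψ₀ ψ : E) (hψ₀ : ‖ψ₀‖ = 1) (hψ : ‖ψ‖ = 1) :
    ‖ψ - ⟪ψ₀, ψ⟫_ℂ • ψ₀‖ ^ 2 = 1 - ‖⟪ψ₀, ψ⟫_ℂ‖ ^ 2 := by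
  set a := ⟪ψ₀, ψ⟫_ℂ with ha
  have hψ₀inner : ⟪ψ₀, ψ₀⟫_ℂ = 1 := by
    rw [inner_self_eq_norm_sq_to_K, hψ₀]; norm_num
  have horth : ⟪a • ψ₀, ψ - a • ψ₀⟫_ℂ = 0 := by
    rw [inner_sub_right, inner_smul_left, inner_smul_left, inner_smul_right, hψ₀inner]
    ring
  have hdecomp : ψ = a • ψ₀ + (ψ - a • ψ₀) := by abel
  have hnorm := norm_add_sq (𝕜 := ℂ) (a • ψ₀) (ψ - a • ψ₀)
  rw [horth] at hnorm
  rw [← hdecomp] at hnorm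
  simp only [map_zero, mul_zero, add_zero] at hnorm
  rw [hψ] at hnorm
  have hsm : ‖a • ψ₀‖ = ‖a‖ := by rw [norm_smul, hψ₀, mul_one]
  rw [hsm] at hnorm
  norm_num at hnorm
  have habs : ‖a‖ = ‖a‖ := rfl
  rw [habs] at hnorm
  linarith

private lemma nudged_cross_bound (C : E →L[ℂ] E) (ψ₀ ψ : E) (hψ₀ : ‖ψ₀‖ = 1) (hψ : ‖ψ‖ = 1) :
    |(⟪ψ, C ψ⟫_ℂ).re - (⟪ψ₀, C ψ₀⟫_ℂ).re| ≤ 4 * ‖C‖ * ‖ψ - ⟪ψ₀, ψ⟫_ℂ • ψ₀‖ := by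
  set a := ⟪ψ₀, ψ⟫_ℂ with ha
  set w := ψ - a • ψ₀ with hw
  set t := ‖w‖ with ht
  have htnn : 0 ≤ t := norm_nonneg _
  have ht2 : t ^ 2 = 1 - ‖a‖ ^ 2 := nudged_pyth ψ₀ ψ hψ₀ hψ
  have hanorm : ‖a‖ ≤ 1 := by
    calc ‖a‖ ≤ ‖ψ₀‖ * ‖ψ‖ := norm_inner_le_norm _ _
      _ = 1 := by rw [hψ₀, hψ]; ring
  have ht1 : t ≤ 1 := by nlinarith [sq_nonneg ‖a‖]
  have h1 : ψ = w + a • ψ₀ := by rw [hw]; abel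
  have hid : ⟪ψ, C ψ⟫_ℂ
      = ⟪w, C w⟫_ℂ + ⟪w, C (a • ψ₀)⟫_ℂ + ⟪a • ψ₀, C w⟫_ℂ + ⟪a • ψ₀, C (a • ψ₀)⟫_ℂ := by
    calc ⟪ψ, C ψ⟫_ℂ = ⟪w + a • ψ₀, C (w + a • ψ₀)⟫_ℂ := by rw [← h1]
      _ = _ := by rw [map_add, inner_add_left, inner_add_right, inner_add_right]; ring
  have hlast : (⟪a • ψ₀, C (a • ψ₀)⟫_ℂ).re = ‖a‖ ^ 2 * (⟪ψ₀, C ψ₀⟫_ℂ).re := by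
    have h2 : ⟪a • ψ₀, C (a • ψ₀)⟫_ℂ = ((‖a‖ ^ 2 : ℝ) : ℂ) * ⟪ψ₀, C ψ₀⟫_ℂ := by
      rw [map_smul, inner_smul_left, inner_smul_right, ← mul_assoc, Complex.conj_mul']
      push_cast; ring
    rw [h2, Complex.re_ofReal_mul]
  have hCnn : (0:ℝ) ≤ ‖C‖ := norm_nonneg _
  have key : ∀ x y : E, |(⟪x, C y⟫_ℂ).re| ≤ ‖C‖ * ‖x‖ * ‖y‖ := by
    intro x y
    calc |(⟪x, C y⟫_ℂ).re| ≤ ‖⟪x, C y⟫_ℂ‖ := Complex.abs_re_le_norm _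
      _ ≤ ‖x‖ * ‖C y‖ := norm_inner_le_norm _ _
      _ ≤ ‖x‖ * (‖C‖ * ‖y‖) := by gcongr; exact C.le_opNorm y
      _ = ‖C‖ * ‖x‖ * ‖y‖ := by ring
  have hansm : ‖a • ψ₀‖ = ‖a‖ := by rw [norm_smul, hψ₀, mul_one]
  have hb1 := key w w
  have hb2 := key w (a • ψ₀)
  have hb3 := key (a • ψ₀) w
  have hc := key ψ₀ ψ₀
  rw [hψ₀] at hc
  rw [hansm] at hb2 hb3
  have hre : (⟪ψ, C ψ⟫_ℂ).re
      = (⟪w, C w⟫_ℂ).re + (⟪w, C (a • ψ₀)⟫_ℂ).re + (⟪a • ψ₀, C w⟫_ℂ).re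
        + ‖a‖ ^ 2 * (⟪ψ₀, C ψ₀⟫_ℂ).re := by
    rw [hid, Complex.add_re, Complex.add_re, Complex.add_re, hlast]
  rw [hre]
  have h1' := abs_le.mp hb1
  have h2' := abs_le.mp hb2
  have h3' := abs_le.mp hb3
  have hc' := abs_le.mp hc
  have hann : (0:ℝ) ≤ ‖a‖ := norm_nonneg _
  rw [abs_le]
  constructor <;>
    nlinarith [sq_nonneg t, sq_nonneg ‖a‖, mul_nonneg hCnn htnn,
      mul_nonneg (mul_nonneg hCnn htnn) htnn, mul_nonneg (mul_nonneg hCnn htnn) hann]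

end NudgedAux

set_option maxHeartbeats 1000000 in
/-- **Differentiability of the nudged ground-state energy at `β = 0` (quantum).**
Suppose the smallest eigenvalue `μ` of the self-adjoint operator `H` has a one-dimensional
eigenspace spanned by the unit eigenvector `ψ₀`.  Then
`lam β = min_{‖ψ‖=1} re⟨ψ, (H + β Ĉ) ψ⟩` is differentiable at `β = 0` with derivative
`re⟨ψ₀, Ĉ ψ₀⟩`. -/
theorem nudged_ground_state_energy_hasDerivAt_zero
    {E : Type*} [NormedAddCommGroup E] [InnerProductSpace ℂ E] [FiniteDimensional ℂ E]
    [Nontrivial E]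
    (H C : E →L[ℂ] E) (hH : IsSelfAdjoint H) (hC : IsSelfAdjoint C)
    (ψ₀ : E) (μ : ℝ) (hψ₀ : ‖ψ₀‖ = 1)
    (heig : H ψ₀ = (μ : ℂ) • ψ₀)
    (hmin : ∀ (ν : ℝ) (v : E), v ≠ 0 → H v = (ν : ℂ) • v → μ ≤ ν)
    (hsimple : ∀ v : E, H v = (μ : ℂ) • v → ∃ c : ℂ, v = c • ψ₀) :
    HasDerivAt
      (fun β : ℝ =>
        ⨅ φ : Metric.sphere (0 : E) 1, (inner ℂ (φ : E) ((H + (β : ℂ) • C) (φ : E)) : ℂ).re)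
      ((inner ℂ ψ₀ (C ψ₀) : ℂ).re) 0 := by
  classical
  obtain ⟨δ, hδpos, hgap⟩ := nudged_gap_lemma H hH ψ₀ μ hψ₀ hmin hsimple
  set c : ℝ := (⟪ψ₀, C ψ₀⟫_ℂ).re with hcdef
  set lam : ℝ → ℝ := fun β =>
    ⨅ φ : Metric.sphere (0 : E) 1, (⟪(φ : E), (H + (β : ℂ) • C) (φ : E)⟫_ℂ).re with hlam
  have happly : ∀ (β : ℝ) (ψ : E),
      (⟪ψ, (H + (β : ℂ) • C) ψ⟫_ℂ).re = (⟪ψ, H ψ⟫_ℂ).re + β * (⟪ψ, C ψ⟫_ℂ).re := by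
    intro β ψ
    rw [ContinuousLinearMap.add_apply, ContinuousLinearMap.smul_apply, inner_add_right,
      inner_smul_right, Complex.add_re, Complex.re_ofReal_mul]
  have hψ₀inner : ⟪ψ₀, ψ₀⟫_ℂ = 1 := by
    rw [inner_self_eq_norm_sq_to_K, hψ₀]; norm_num
  have hψ₀H : (⟪ψ₀, H ψ₀⟫_ℂ).re = μ := by
    rw [heig, inner_smul_right, hψ₀inner, mul_one, Complex.ofReal_re]
  have hmemψ₀ : ψ₀ ∈ Metric.sphere (0 : E) 1 := by
    rw [mem_sphere_zero_iff_norm]; exact hψ₀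
  have hub : ∀ β : ℝ, lam β ≤ μ + β * c := by
    intro β
    have h := ciInf_le (nudged_bdd_below (H + (β : ℂ) • C))
      (⟨ψ₀, hmemψ₀⟩ : Metric.sphere (0 : E) 1)
    rw [hlam]
    refine h.trans (le_of_eq ?_)
    rw [happly β ψ₀, hψ₀H]
  have hCnn : (0:ℝ) ≤ ‖C‖ := norm_nonneg _
  have key : ∀ β : ℝ, ∃ t : ℝ, 0 ≤ t ∧ δ * t ^ 2 ≤ 4 * ‖C‖ * |β| ∧
      |lam β - (μ + β * c)| ≤ |β| * (4 * ‖C‖ * t) := by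
    intro β
    obtain ⟨ψ, hψ1, heq⟩ := nudged_attain (H + (β : ℂ) • C)
    set t := ‖ψ - ⟪ψ₀, ψ⟫_ℂ • ψ₀‖ with htd
    have htnn : (0:ℝ) ≤ t := norm_nonneg _
    have hpy : t ^ 2 = 1 - ‖⟪ψ₀, ψ⟫_ℂ‖ ^ 2 := nudged_pyth ψ₀ ψ hψ₀ hψ1
    have ht1 : t ≤ 1 := by nlinarith [sq_nonneg ‖⟪ψ₀, ψ⟫_ℂ‖]
    have hA : lam β = (⟪ψ, H ψ⟫_ℂ).re + β * (⟪ψ, C ψ⟫_ℂ).re := by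
      rw [hlam]
      exact heq.trans (happly β ψ)
    have hgapψ := hgap ψ
    rw [hψ1] at hgapψ
    simp only [one_pow, mul_one] at hgapψ
    have hδt2 : δ * t ^ 2 = δ * (1 - ‖⟪ψ₀, ψ⟫_ℂ‖ ^ 2) := by rw [hpy]
    have hB : μ + δ * t ^ 2 ≤ (⟪ψ, H ψ⟫_ℂ).re := by
      linarith [hδt2.le, hδt2.ge]
    have hcb := nudged_cross_bound C ψ₀ ψ hψ₀ hψ1
    have hubβ := hub β
    set r : ℝ := (⟪ψ, C ψ⟫_ℂ).re with hrdef
    have e1 : β * (c - r) ≤ |β| * (4 * ‖C‖ * t) := by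
      calc β * (c - r) ≤ |β * (c - r)| := le_abs_self _
        _ = |β| * |c - r| := abs_mul _ _
        _ = |β| * |r - c| := by rw [abs_sub_comm]
        _ ≤ |β| * (4 * ‖C‖ * t) := by
            exact mul_le_mul_of_nonneg_left hcb (abs_nonneg β)
    have hβnn : (0:ℝ) ≤ |β| := abs_nonneg β
    have e2 : |β| * (4 * ‖C‖ * t) ≤ 4 * ‖C‖ * |β| := by
      calc |β| * (4 * ‖C‖ * t) = (4 * ‖C‖ * |β|) * t := by ring
        _ ≤ (4 * ‖C‖ * |β|) * 1 := by
            exact mul_le_mul_of_nonneg_left ht1 (by positivity)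
        _ = 4 * ‖C‖ * |β| := mul_one _
    have e3 : -(|β| * (4 * ‖C‖ * t)) ≤ β * (r - c) := by
      have h01 : |β * (r - c)| = |β| * |r - c| := abs_mul _ _
      have h02 : |β| * |r - c| ≤ |β| * (4 * ‖C‖ * t) :=
        mul_le_mul_of_nonneg_left hcb hβnn
      have h03 := neg_abs_le (β * (r - c))
      rw [h01] at h03
      linarith
    have hδtnn : 0 ≤ δ * t ^ 2 := mul_nonneg hδpos.le (sq_nonneg t)
    refine ⟨t, htnn, ?_, ?_⟩
    · linarith
    · rw [abs_le]
      constructor <;> linarith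
  have hlam0 : lam 0 = μ := by
    obtain ⟨t, htnn, ht1, ht2⟩ := key 0
    simp only [abs_zero, zero_mul, mul_zero, add_zero] at ht2
    have := abs_le.mp ht2
    linarith [this.1, this.2]
  rw [hasDerivAt_iff_isLittleO, Asymptotics.isLittleO_iff]
  intro ε hε
  set K : ℝ := 4 * ‖C‖ + 1 with hK
  have hKpos : (0:ℝ) < K := by positivity
  set η : ℝ := ε ^ 2 * δ / K ^ 3 with hη
  have hηpos : 0 < η := by positivity
  filter_upwards [Metric.ball_mem_nhds (0 : ℝ) hηpos] with β hβ
  rw [Metric.mem_ball, Real.dist_eq, sub_zero] at hβ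
  obtain ⟨t, htnn, hδt, hbound⟩ := key β
  have hβnn : (0:ℝ) ≤ |β| := abs_nonneg β
  have hsmall : 4 * ‖C‖ * t ≤ ε := by
    have h1 : δ * t ^ 2 ≤ K * |β| := by nlinarith
    have h2 : t ^ 2 ≤ K * |β| / δ := by
      rw [le_div_iff₀ hδpos]; linarith [h1]
    have h3 : (4 * ‖C‖ * t) ^ 2 ≤ K ^ 2 * t ^ 2 := by
      rw [hK]
      nlinarith [mul_nonneg (show (0:ℝ) ≤ 8 * ‖C‖ + 1 by positivity) (sq_nonneg t)]
    have h4 : K ^ 2 * t ^ 2 ≤ K ^ 2 * (K * |β| / δ) := by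
      apply mul_le_mul_of_nonneg_left h2 (by positivity)
    have h5 : K ^ 2 * (K * |β| / δ) = K ^ 3 * |β| / δ := by ring
    have h6 : K ^ 3 * |β| / δ ≤ K ^ 3 * η / δ := by gcongr
    have h7 : K ^ 3 * η / δ = ε ^ 2 := by
      rw [hη]
      have hK3 : (K:ℝ) ^ 3 ≠ 0 := by positivity
      field_simp
    have hx2 : (4 * ‖C‖ * t) ^ 2 ≤ ε ^ 2 := by
      calc (4 * ‖C‖ * t) ^ 2 ≤ K ^ 2 * t ^ 2 := h3
        _ ≤ K ^ 2 * (K * |β| / δ) := h4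
        _ = K ^ 3 * |β| / δ := h5
        _ ≤ K ^ 3 * η / δ := h6
        _ = ε ^ 2 := h7
    nlinarith [sq_nonneg (4 * ‖C‖ * t - ε), hε, mul_nonneg (mul_nonneg (by positivity : (0:ℝ) ≤ (4:ℝ)) hCnn) htnn]
  calc ‖lam β - lam 0 - (β - 0) • c‖
      = |lam β - (μ + β * c)| := by
        rw [hlam0, Real.norm_eq_abs, sub_zero, smul_eq_mul]
        ring_nf
    _ ≤ |β| * (4 * ‖C‖ * t) := hbound
    _ ≤ |β| * ε := mul_le_mul_of_nonneg_left hsmall hβnn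
    _ = ε * ‖β - 0‖ := by rw [sub_zero, Real.norm_eq_abs]; ring
end

section
/- Exact gradient of the quantum contrastive function: Fix β ≠ 0. Let H : ℝ → (E →L[ℂ] E) be a differentiable family of self-adjoint operators, Ĉ : E →L[ℂ] E self-adjoint, and let ψ_β, ψ₀ : ℝ → E be differentiable families of unit vectors such that (H(w) + β • Ĉ)(ψ_β(w)) = λ_β(w) • ψ_β(w) and H(w)(ψ₀(w)) = λ₀(w) • ψ₀(w) for real functions λ_β, λ₀. Then the quantum contrastive function w ↦ (1/β)[re⟨ψ_β(w), (H(w) + β • Ĉ) ψ_β(w)⟩ − re⟨ψ₀(w), H(w) ψ₀(w)⟩] is differentiable with derivative (1/β)[re⟨ψ_β(w), H′(w) ψ_β(w)⟩ − re⟨ψ₀(w), H′(w) ψ₀(w)⟩]. -/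
set_option maxHeartbeats 1000000

open ContinuousLinearMap

lemma hellmann_feynman_s13
    {E : Type*} [NormedAddCommGroup E] [InnerProductSpace ℂ E] [FiniteDimensional ℂ E]
    {A : ℝ → E →L[ℂ] E} {A' : E →L[ℂ] E} {ψ : ℝ → E} {ψ' : E} {w : ℝ} {lam : ℝ}
    (hA : HasDerivAt A A' w) (hAsa : IsSelfAdjoint (A w))
    (hψ : HasDerivAt ψ ψ' w) (hnorm : ∀ t, ‖ψ t‖ = 1)
    (heig : A w (ψ w) = (lam : ℂ) • ψ w) :
    HasDerivAt (fun t => (inner ℂ (ψ t) (A t (ψ t)) : ℂ).re)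
      ((inner ℂ (ψ w) (A' (ψ w)) : ℂ).re) w := by
  have hB : HasDerivAt (fun t => (A t).restrictScalars ℝ) (A'.restrictScalars ℝ) w :=
    (ContinuousLinearMap.restrictScalarsL ℂ E E ℝ ℝ).hasFDerivAt.comp_hasDerivAt w hA
  have h1 : HasDerivAt (fun t => A t (ψ t)) (A' (ψ w) + A w ψ') w := hB.clm_apply hψ
  have h2 : HasDerivAt (fun t => (inner ℂ (ψ t) (A t (ψ t)) : ℂ))
      ((inner ℂ (ψ w) (A' (ψ w) + A w ψ') : ℂ) + inner ℂ ψ' (A w (ψ w))) w :=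
    hψ.inner ℂ h1
  -- derivative of constant ⟪ψ,ψ⟫
  have hc : HasDerivAt (fun t => (inner ℂ (ψ t) (ψ t) : ℂ))
      ((inner ℂ (ψ w) ψ' : ℂ) + inner ℂ ψ' (ψ w)) w := hψ.inner ℂ hψ
  have hconst : (fun t => (inner ℂ (ψ t) (ψ t) : ℂ)) = fun _ => (1 : ℂ) := by
    funext t
    rw [inner_self_eq_norm_sq_to_K, hnorm t]
    norm_num
  have hzero : (inner ℂ (ψ w) ψ' : ℂ) + inner ℂ ψ' (ψ w) = 0 := by
    have h0 : HasDerivAt (fun t => (inner ℂ (ψ t) (ψ t) : ℂ)) 0 w := by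
      rw [hconst]; exact hasDerivAt_const w 1
    exact hc.unique h0
  have hsa : ∀ x y, (inner ℂ (A w x) y : ℂ) = inner ℂ x (A w y) := fun x y =>
    hAsa.isSymmetric x y
  have key : (inner ℂ (ψ w) (A' (ψ w) + A w ψ') : ℂ) + inner ℂ ψ' (A w (ψ w))
      = inner ℂ (ψ w) (A' (ψ w)) := by
    rw [inner_add_right, ← hsa, heig, inner_smul_left, inner_smul_right,
      Complex.conj_ofReal]
    have : (lam : ℂ) * inner ℂ (ψ w) ψ' + (lam : ℂ) * inner ℂ ψ' (ψ w)
        = (lam : ℂ) * ((inner ℂ (ψ w) ψ' : ℂ) + inner ℂ ψ' (ψ w)) := by ring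
    rw [add_assoc, this, hzero, mul_zero, add_zero]
  rw [key] at h2
  exact (Complex.reCLM.hasFDerivAt.comp_hasDerivAt w h2)

/-- **Exact gradient of the quantum contrastive function.**
Fix `β ≠ 0`.  Let `H : ℝ → (E →L[ℂ] E)` be a differentiable family of self-adjoint
Hamiltonians, `Ĉ` a self-adjoint cost observable, and `ψβ(w)`, `ψ₀(w)` differentiable
families of unit eigenvectors of `H(w) + β Ĉ` and `H(w)` respectively.  Then the quantum
contrastive function
`w ↦ (1/β)[re⟨ψβ(w), (H(w) + β Ĉ) ψβ(w)⟩ − re⟨ψ₀(w), H(w) ψ₀(w)⟩]`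
is differentiable with derivative
`(1/β)[re⟨ψβ(w), H′(w) ψβ(w)⟩ − re⟨ψ₀(w), H′(w) ψ₀(w)⟩]`. -/
theorem exact_gradient_of_quantum_contrastive_function
    {E : Type*} [NormedAddCommGroup E] [InnerProductSpace ℂ E] [FiniteDimensional ℂ E]
    (β : ℝ) (hβ : β ≠ 0)
    (H : ℝ → (E →L[ℂ] E)) (hH : Differentiable ℝ H)
    (hHsa : ∀ w, IsSelfAdjoint (H w))
    (C : E →L[ℂ] E) (hC : IsSelfAdjoint C)
    (ψβ ψ₀ : ℝ → E) (hψβ : Differentiable ℝ ψβ) (hψ₀ : Differentiable ℝ ψ₀)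
    (hψβnorm : ∀ w, ‖ψβ w‖ = 1) (hψ₀norm : ∀ w, ‖ψ₀ w‖ = 1)
    (Λβ Λ₀ : ℝ → ℝ)
    (heigβ : ∀ w, (H w + (β : ℂ) • C) (ψβ w) = ((Λβ w : ℝ) : ℂ) • ψβ w)
    (heig₀ : ∀ w, (H w) (ψ₀ w) = ((Λ₀ w : ℝ) : ℂ) • ψ₀ w) :
    ∀ w : ℝ,
      HasDerivAt
        (fun w' => (1 / β) *
          ((inner ℂ (ψβ w') ((H w' + (β : ℂ) • C) (ψβ w')) : ℂ).re -
            (inner ℂ (ψ₀ w') ((H w') (ψ₀ w')) : ℂ).re))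
        ((1 / β) *
          ((inner ℂ (ψβ w) ((deriv H w) (ψβ w)) : ℂ).re -
            (inner ℂ (ψ₀ w) ((deriv H w) (ψ₀ w)) : ℂ).re))
        w := by
  intro w
  have hH' : HasDerivAt H (deriv H w) w := (hH w).hasDerivAt
  have hA : HasDerivAt (fun t => H t + (β : ℂ) • C) (deriv H w) w := by
    simpa using hH'.add_const ((β : ℂ) • C)
  have hAsa : IsSelfAdjoint (H w + (β : ℂ) • C) := by
    simp only [IsSelfAdjoint, star_add, star_smul, hC.star_eq, (hHsa w).star_eq,
      RCLike.star_def, Complex.conj_ofReal]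
  have t1 := hellmann_feynman_s13 hA hAsa (hψβ w).hasDerivAt hψβnorm (heigβ w)
  have t2 := hellmann_feynman_s13 hH' (hHsa w) (hψ₀ w).hasDerivAt hψ₀norm (heig₀ w)
  have := (t1.sub t2).const_mul (1 / β)
  exact this
end
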